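/- arXiv:2208.15000 — 4 statements merged into one kernel-verified Lean document; each statement's English description precedes it below -/
import Mathlib

section
/- Let A = KQ/I be a special biserial algebra over an algebraically closed field K, let w be a string for A and M(w) the string module with its standard basis z_0,…,z_r. Then for every subrepresentation L of M(w) there exists a subrepresentation L̃ of M(w) with dim L̃ = dim L such that at every vertex i the subspace L̃_i is spanned by a subset of the standard basis vectors lying at i; equivalently, L̃ is the subrepresentation of M(w) spanned by {z_j : j ∈ J} for a subset J ⊆ {0,…,r} defining a subrepresentation of the thin representation T(w). In particular, L̃ is a direct sum of string modules and does not embed diagonally into M(w). -/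
attribute [local instance] Classical.propDecidable

/-- A finite quiver: finite sets of vertices and arrows with source and target maps. -/
structure FinQuiver where
  V : Type
  A : Type
  [fintypeV : Fintype V]
  [decEqV : DecidableEq V]
  [fintypeA : Fintype A]
  [decEqA : DecidableEq A]
  s : A → V
  t : A → V

attribute [instance] FinQuiver.fintypeV FinQuiver.decEqV FinQuiver.fintypeA FinQuiver.decEqA

/-- A finite-dimensional representation of a finite quiver over a field `K`. -/
structure QRep (K : Type) [Field K] (Q : FinQuiver) where
  M : Q.V → Type
  [acg : ∀ i, AddCommGroup (M i)]
  [mod : ∀ i, Module K (M i)]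
  [fd : ∀ i, FiniteDimensional K (M i)]
  φ : ∀ a : Q.A, M (Q.s a) →ₗ[K] M (Q.t a)

attribute [instance] QRep.acg QRep.mod QRep.fd

/-- A subrepresentation: a subspace at every vertex, compatible with the arrow maps. -/
structure QSubRep {K : Type} [Field K] {Q : FinQuiver} (R : QRep K Q) where
  L : ∀ i, Submodule K (R.M i)
  compat : ∀ a : Q.A, ∀ x ∈ L (Q.s a), R.φ a x ∈ L (Q.t a)

def QSubRep.le {K : Type} [Field K] {Q : FinQuiver} {R : QRep K Q} (N N' : QSubRep R) : Prop :=
  ∀ i, N.L i ≤ N'.L i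

/-- The dimension vector of a representation. -/
noncomputable def QRep.dimVec {K : Type} [Field K] {Q : FinQuiver} (R : QRep K Q) (i : Q.V) : ℕ :=
  Module.finrank K (R.M i)

/-- Standard inner product of a real vector with a dimension vector. -/
def stabInner {Q : FinQuiver} (v : Q.V → ℝ) (d : Q.V → ℕ) : ℝ :=
  ∑ i, v i * (d i : ℝ)

/-- `v`-semistability of a representation. -/
def IsSemistable {K : Type} [Field K] {Q : FinQuiver} (R : QRep K Q) (v : Q.V → ℝ) : Prop :=
  stabInner v R.dimVec = 0 ∧
    ∀ N : QSubRep R, stabInner v (fun i => Module.finrank K (N.L i)) ≤ 0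

/-- The stability space of a representation. -/
def stabSpace {K : Type} [Field K] {Q : FinQuiver} (R : QRep K Q) : Set (Q.V → ℝ) :=
  {v | IsSemistable R v}

/-- `v`-stability of a representation. -/
def IsStable {K : Type} [Field K] {Q : FinQuiver} (R : QRep K Q) (v : Q.V → ℝ) : Prop :=
  stabInner v R.dimVec = 0 ∧
    ∀ N : QSubRep R, (∃ i, N.L i ≠ ⊥) → (∃ i, N.L i ≠ ⊤) →
      stabInner v (fun i => Module.finrank K (N.L i)) < 0

/-- The thin sincere representation with identity maps: `K` at every vertex. -/
noncomputable def thinRep (K : Type) [Field K] (Q : FinQuiver) : QRep K Q where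
  M _ := K
  φ _ := LinearMap.id

/-- The set of all finite non-negative real linear combinations of elements of `X`. -/
def coneSpan {E : Type} [AddCommMonoid E] [Module ℝ E] (X : Set E) : Set E :=
  {x | ∃ (n : ℕ) (c : Fin n → ℝ) (f : Fin n → E),
    (∀ j, 0 ≤ c j) ∧ (∀ j, f j ∈ X) ∧ x = ∑ j, c j • f j}

/-- The standard basis vector of `ℝ^{Q₀}` at a vertex. -/
noncomputable def eVec (Q : FinQuiver) (i : Q.V) : Q.V → ℝ := Pi.single i 1

/-- A subrepresentation viewed as a representation in its own right. -/
noncomputable def QSubRep.toRep {K : Type} [Field K] {Q : FinQuiver} {R : QRep K Q}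
    (N : QSubRep R) : QRep K Q where
  M i := ↥(N.L i)
  φ a := (R.φ a).restrict (fun x hx => N.compat a x hx)

/-- The quotient of a representation by a subrepresentation. -/
noncomputable def QRep.quotBy {K : Type} [Field K] {Q : FinQuiver} (R : QRep K Q)
    (N : QSubRep R) : QRep K Q where
  M i := R.M i ⧸ N.L i
  φ a := Submodule.mapQ _ _ (R.φ a) (fun x hx => N.compat a x hx)

/-- The quotient `N'/N` of nested subrepresentations, as a representation. -/
noncomputable def quotRep {K : Type} [Field K] {Q : FinQuiver} (R : QRep K Q)
    (N N' : QSubRep R) (h : QSubRep.le N N') : QRep K Q where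
  M i := ↥(N'.L i) ⧸ Submodule.comap (N'.L i).subtype (N.L i)
  φ a := Submodule.mapQ _ _ ((R.φ a).restrict (fun x hx => N'.compat a x hx))
    (by
      intro x hx
      simp only [Submodule.mem_comap, Submodule.subtype_apply,
        LinearMap.restrict_apply] at hx ⊢
      exact N.compat a _ hx)

/-- A representation is nonzero if some vertex space is nonzero. -/
def QRep.Nonzero {K : Type} [Field K] {Q : FinQuiver} (R : QRep K Q) : Prop :=
  ∃ i, Module.finrank K (R.M i) ≠ 0

/-- Indecomposability: nonzero and admitting no internal direct sum decomposition into two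
nonzero subrepresentations. -/
def Indecomposable {K : Type} [Field K] {Q : FinQuiver} (R : QRep K Q) : Prop :=
  R.Nonzero ∧
    ¬∃ U W : QSubRep R, (∃ i, U.L i ≠ ⊥) ∧ (∃ i, W.L i ≠ ⊥) ∧
      (∀ i, U.L i ⊓ W.L i = ⊥) ∧ (∀ i, U.L i ⊔ W.L i = ⊤)

/-- Isomorphism of representations. -/
def RepIso {K : Type} [Field K] {Q : FinQuiver} (R R' : QRep K Q) : Prop :=
  ∃ f : ∀ i, R.M i ≃ₗ[K] R'.M i,
    ∀ (a : Q.A) (x : R.M (Q.s a)), f (Q.t a) (R.φ a x) = R'.φ a (f (Q.s a) x)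

/-- The support of a representation. -/
def QRep.supp {K : Type} [Field K] {Q : FinQuiver} (R : QRep K Q) : Set Q.V :=
  {i | Module.finrank K (R.M i) ≠ 0}

/-- The stability space restricted to the coordinate subspace of the support. -/
def Dsupp {K : Type} [Field K] {Q : FinQuiver} (R : QRep K Q) : Set (Q.V → ℝ) :=
  stabSpace R ∩ {v | ∀ i, i ∉ R.supp → v i = 0}

/-- Standard inner product on `ℝ^V`. -/
def rInner {V : Type} [Fintype V] (a v : V → ℝ) : ℝ := ∑ i, a i * v i

/-- A face of a polyhedral cone. -/
def IsFace {V : Type} [Fintype V] (C F : Set (V → ℝ)) : Prop :=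
  ∃ a : V → ℝ, (∀ v ∈ C, rInner a v ≤ 0) ∧ F = C ∩ {v | rInner a v = 0}

/-- The dimension of the linear span of a subset of `ℝ^V`. -/
noncomputable def coneDim {V : Type} [Fintype V] (F : Set (V → ℝ)) : ℕ :=
  Module.finrank ℝ ↥(Submodule.span ℝ F)

/-- A facet: a face of codimension one. -/
def IsFacet {V : Type} [Fintype V] (C F : Set (V → ℝ)) : Prop :=
  IsFace C F ∧ coneDim F + 1 = coneDim C

/-- Composability of a list of arrows (a directed path). -/
def PathComposable {Q : FinQuiver} : List Q.A → Prop
  | [] => True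
  | [_] => True
  | a :: b :: l => Q.t a = Q.s b ∧ PathComposable (b :: l)

/-- Letters: direct arrows (`inl`) and formal inverses of arrows (`inr`). -/
abbrev Letter (Q : FinQuiver) := Q.A ⊕ Q.A

/-- Source of a letter. -/
def lsrc {Q : FinQuiver} : Letter Q → Q.V
  | Sum.inl a => Q.s a
  | Sum.inr a => Q.t a

/-- Target of a letter. -/
def ltgt {Q : FinQuiver} : Letter Q → Q.V
  | Sum.inl a => Q.t a
  | Sum.inr a => Q.s a

/-- The formal inverse of a letter. -/
def linv {Q : FinQuiver} : Letter Q → Letter Q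
  | Sum.inl a => Sum.inr a
  | Sum.inr a => Sum.inl a

/-- The underlying quiver arrow of a letter. -/
def und {Q : FinQuiver} : Letter Q → Q.A
  | Sum.inl a => a
  | Sum.inr a => a

/-- A letter is direct if it is an arrow (not a formal inverse). -/
def isDir {Q : FinQuiver} (c : Letter Q) : Prop := c.isLeft = true

/-- Composability of a word of letters. -/
def WordComposable {Q : FinQuiver} : List (Letter Q) → Prop
  | [] => True
  | [_] => True
  | c :: d :: l => ltgt c = lsrc d ∧ WordComposable (d :: l)

/-- Reducedness of a word: no letter is followed by its own inverse. -/
def WordReduced {Q : FinQuiver} : List (Letter Q) → Prop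
  | [] => True
  | [_] => True
  | c :: d :: l => d ≠ linv c ∧ WordReduced (d :: l)

/-- A bound quiver: a set of (monomial) relations generating an admissible ideal. -/
structure BoundQuiver (Q : FinQuiver) where
  rel : List Q.A → Prop
  adm_comp : ∀ u, rel u → PathComposable u ∧ 2 ≤ u.length
  adm_bound : ∃ N : ℕ, ∀ u : List Q.A, PathComposable u → N ≤ u.length →
    ∃ u', rel u' ∧ u' <:+: u

/-- The special biserial conditions on a bound quiver algebra. -/
def SpecialBiserial {Q : FinQuiver} (D : BoundQuiver Q) : Prop :=
  (∀ v : Q.V, Set.ncard {a : Q.A | Q.s a = v} ≤ 2) ∧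
  (∀ v : Q.V, Set.ncard {a : Q.A | Q.t a = v} ≤ 2) ∧
  (∀ a c d : Q.A, Q.t a = Q.s c → Q.t a = Q.s d → c ≠ d → D.rel [a, c] ∨ D.rel [a, d]) ∧
  (∀ a b c : Q.A, Q.t a = Q.s c → Q.t b = Q.s c → a ≠ b → D.rel [a, c] ∨ D.rel [b, c])

/-- A string: a nonempty composable reduced word such that no subword of it or of its
inverse lies in the ideal. -/
structure IsString {Q : FinQuiver} (D : BoundQuiver Q) (w : List (Letter Q)) : Prop where
  ne : w ≠ []
  comp : WordComposable w
  red : WordReduced w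
  avoid : ∀ u : List Q.A, u.map Sum.inl <:+: w → ¬D.rel u
  avoid_inv : ∀ u : List Q.A, (u.map Sum.inr).reverse <:+: w → ¬D.rel u

/-- The `k`-fold concatenation of a word with itself. -/
def listPow {α : Type} (u : List α) : ℕ → List α
  | 0 => []
  | n + 1 => u ++ listPow u n

/-- A band: a cyclic word all of whose powers are strings, which is not itself a proper
power of a shorter word. -/
def IsBand {Q : FinQuiver} (D : BoundQuiver Q) (b : List (Letter Q)) : Prop :=
  b ≠ [] ∧ (∀ m : ℕ, 1 ≤ m → IsString D (listPow b m)) ∧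
    ∀ (u : List (Letter Q)) (k : ℕ), 2 ≤ k → b ≠ listPow u k

/-- The `j`-th vertex visited by a (nonempty) walk `w`. -/
def wVtx {Q : FinQuiver} (w : List (Letter Q)) (hw : w ≠ []) (j : ℕ) : Q.V :=
  if j = 0 then lsrc (w.head hw) else ltgt (w.getD (j - 1) (w.head hw))

/-- The basis vector at position `j` is sent to the one at position `k` by the arrow `a`. -/
def stepsTo {Q : FinQuiver} (w : List (Letter Q)) (a : Q.A) (j k : ℕ) : Prop :=
  (k = j + 1 ∧ w[j]? = some (Sum.inl a)) ∨ (j = k + 1 ∧ w[k]? = some (Sum.inr a))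

/-- The string module `M(w)` of a nonempty walk `w`, with one standard basis vector for each
vertex visit, direct letters acting forwards and inverse letters acting backwards. -/
noncomputable def stringRep (K : Type) [Field K] (Q : FinQuiver) (w : List (Letter Q))
    (hw : w ≠ []) : QRep K Q where
  M i := ({j : Fin (w.length + 1) // wVtx w hw j = i} → K)
  φ a := Matrix.mulVecLin
    (fun (p : {j : Fin (w.length + 1) // wVtx w hw (j : ℕ) = Q.t a})
         (q : {j : Fin (w.length + 1) // wVtx w hw (j : ℕ) = Q.s a}) =>
      if stepsTo w a (q.1 : ℕ) (p.1 : ℕ) then (1 : K) else 0)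

/-- The vertex `v_j` traversed by a cyclic word (indices mod the length). -/
def bVtx {Q : FinQuiver} (b : List (Letter Q)) (hb : b ≠ []) (j : ℕ) : Q.V :=
  lsrc (b.getD (j % b.length) (b.head hb))

/-- The `j`-th letter of a cyclic word (indices mod the length). -/
def bLett {Q : FinQuiver} (b : List (Letter Q)) (hb : b ≠ []) (j : ℕ) : Letter Q :=
  b.getD (j % b.length) (b.head hb)

/-- Entry of the Jordan block of size `m` with eigenvalue `lam`. -/
noncomputable def jordEntry {K : Type} [Field K] (lam : K) {m : ℕ} (κ μ : Fin m) : K :=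
  if κ = μ then lam else if (μ : ℕ) + 1 = (κ : ℕ) then 1 else 0

/-- The matrix entry of the action of the arrow `a` on a band module, from the basis vector
`z_j^μ` to the basis vector `z_k^κ`: all letters act by identity matrices except the last
one, which acts by the Jordan block with eigenvalue `lam`. -/
noncomputable def bandEntry {Q : FinQuiver} (K : Type) [Field K] (b : List (Letter Q))
    (hb : b ≠ []) (lam : K) {m : ℕ} (a : Q.A) (k j : ℕ) (κ μ : Fin m) : K :=
  (if bLett b hb j = Sum.inl a ∧ (j + 1) % b.length = k % b.length then
    (if j % b.length + 1 = b.length then jordEntry lam κ μ else if κ = μ then 1 else 0)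
   else 0)
  + (if bLett b hb k = Sum.inr a ∧ (k + 1) % b.length = j % b.length then
    (if k % b.length + 1 = b.length then jordEntry lam κ μ else if κ = μ then 1 else 0)
   else 0)

/-- The band module `M(b, lam, m)`. -/
noncomputable def bandRep (K : Type) [Field K] (Q : FinQuiver) (b : List (Letter Q))
    (hb : b ≠ []) (lam : K) (m : ℕ) : QRep K Q where
  M i := (({j : Fin b.length // bVtx b hb j = i} × Fin m) → K)
  φ a := Matrix.mulVecLin
    (fun (p : {j : Fin b.length // bVtx b hb (j : ℕ) = Q.t a} × Fin m)
         (q : {j : Fin b.length // bVtx b hb (j : ℕ) = Q.s a} × Fin m) =>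
      bandEntry K b hb lam a (p.1.1 : ℕ) (q.1.1 : ℕ) p.2 q.2)

/-- The quiver `Q_w` having the same shape as the walk `w`. -/
@[reducible] def stringQuiver (Q : FinQuiver) (w : List (Letter Q)) : FinQuiver where
  V := Fin (w.length + 1)
  A := Fin w.length
  s j := match w.get j with
    | Sum.inl _ => j.castSucc
    | Sum.inr _ => j.succ
  t j := match w.get j with
    | Sum.inl _ => j.succ
    | Sum.inr _ => j.castSucc

/-- Cyclic successor in `Fin n`. -/
def cycSucc {n : ℕ} (j : Fin n) : Fin n := ⟨((j : ℕ) + 1) % n, Nat.mod_lt _ j.pos⟩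

/-- The cyclic quiver `Q_b` having the same shape as the cyclic word `b`. -/
@[reducible] def bandQuiver (Q : FinQuiver) (b : List (Letter Q)) : FinQuiver where
  V := Fin b.length
  A := Fin b.length
  s j := match b.get j with
    | Sum.inl _ => j
    | Sum.inr _ => cycSucc j
  t j := match b.get j with
    | Sum.inl _ => cycSucc j
    | Sum.inr _ => j

/-- A ray vector of a cone. -/
def IsRay {E : Type} [AddCommMonoid E] [Module ℝ E] (C : Set E) (u : E) : Prop :=
  u ∈ C ∧ u ≠ 0 ∧ ∀ x ∈ C, ∀ y ∈ C, u = x + y →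
    (∃ c : ℝ, 0 ≤ c ∧ x = c • u) ∧ ∃ c : ℝ, 0 ≤ c ∧ y = c • u

/-- A minimal admissible sum: a nonzero non-negative combination of elements of `S` lying in
the subspace `Rsub`, such that no nonzero non-negative combination supported on a proper
subset of its support lies in `Rsub`. -/
def IsMinAdmissibleSum {E : Type} [AddCommGroup E] [Module ℝ E] (Rsub : Set E)
    (S : Finset E) (x : E) : Prop :=
  ∃ lam : E → ℝ, (∀ s ∈ S, 0 ≤ lam s) ∧ x = ∑ s ∈ S, lam s • s ∧ x ∈ Rsub ∧ x ≠ 0 ∧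
    ¬∃ mu : E → ℝ, (∀ s ∈ S, 0 ≤ mu s) ∧
      {s ∈ S | mu s ≠ 0} ⊂ {s ∈ S | lam s ≠ 0} ∧
      (∑ s ∈ S, mu s • s) ∈ Rsub ∧ (∑ s ∈ S, mu s • s) ≠ 0

/-- The preorder induced by a walk `u` on the vertices: generated by `t(α) ≤ s(α)` over the
underlying arrows `α` of the letters of `u`. -/
def wordRel {Q : FinQuiver} (u : List (Letter Q)) : Q.V → Q.V → Prop :=
  Relation.ReflTransGen (fun x y => ∃ c ∈ u, Q.t (und c) = x ∧ Q.s (und c) = y)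

/-- `v` is obtained from the cyclic word `b` by deleting one letter. -/
def DeleteOne {Q : FinQuiver} (b v : List (Letter Q)) : Prop :=
  ∃ (l₁ l₂ : List (Letter Q)) (c : Letter Q), b = l₁ ++ c :: l₂ ∧ v = l₂ ++ l₁

/-- The generating vector of the stability space of a thin band module attached to the
`i`-th letter: `e_{v_i} - e_{v_{i+1}}` for a direct letter and its negative otherwise. -/
noncomputable def sVec {Q : FinQuiver} (b : List (Letter Q)) (hb : b ≠ []) (i : ℕ) :
    Q.V → ℝ :=
  if isDir (bLett b hb i) then
    Pi.single (bVtx b hb i) 1 - Pi.single (bVtx b hb (i + 1)) 1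
  else Pi.single (bVtx b hb (i + 1)) 1 - Pi.single (bVtx b hb i) 1

/-- The set `S = {s_1, …, s_n}` of generating vectors. -/
def Sset {Q : FinQuiver} (b : List (Letter Q)) (hb : b ≠ []) : Set (Q.V → ℝ) :=
  {u | ∃ i < b.length, u = sVec b hb i}

/-- The `g`-vector of the thin band module: the sum of the `s_i` over direct letters. -/
noncomputable def gVec {Q : FinQuiver} (b : List (Letter Q)) (hb : b ≠ []) : Q.V → ℝ :=
  ∑ i ∈ Finset.range b.length, if isDir (bLett b hb i) then sVec b hb i else 0

/-- The coefficient `ε_i` (for the mathematical index `i`, with letters `α_{i-1}`, `α_i`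
at 0-based positions `i-2`, `i-1`). -/
noncomputable def epsCoef {Q : FinQuiver} (b : List (Letter Q)) (hb : b ≠ []) (i : ℕ) : ℝ :=
  if ¬isDir (bLett b hb (i - 2)) ∧ isDir (bLett b hb (i - 1)) then 1
  else if isDir (bLett b hb (i - 2)) ∧ ¬isDir (bLett b hb (i - 1)) then -1
  else 0

/-- The vector `g_w` for `w = α_1 ⋯ α_m` (the `g`-vector of `M(w)`). -/
noncomputable def gwVec {Q : FinQuiver} (b : List (Letter Q)) (hb : b ≠ []) (m : ℕ) :
    Q.V → ℝ :=
  (if isDir (bLett b hb 0) then Pi.single (bVtx b hb 0) (1 : ℝ) else 0)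
  + (if 1 ≤ m ∧ ¬isDir (bLett b hb (m - 1)) then Pi.single (bVtx b hb m) (1 : ℝ) else 0)
  + (if 1 ≤ m ∧ isDir (bLett b hb m) then -Pi.single (bVtx b hb (m + 1)) (1 : ℝ) else 0)
  + (if isDir (bLett b hb (b.length - 1)) then -Pi.single (bVtx b hb (b.length - 1)) (1 : ℝ)
     else 0)
  + ∑ i ∈ Finset.Icc 2 m, epsCoef b hb i • (Pi.single (bVtx b hb (i - 1)) (1 : ℝ) : Q.V → ℝ)

/-- The vector `g_w'` for `w = α_1 ⋯ α_m` (equal to `-g^{M(w)ᵒᵖ}`). -/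
noncomputable def gwVec' {Q : FinQuiver} (b : List (Letter Q)) (hb : b ≠ []) (m : ℕ) :
    Q.V → ℝ :=
  (if ¬isDir (bLett b hb 0) then -Pi.single (bVtx b hb 0) (1 : ℝ) else 0)
  + (if 1 ≤ m ∧ isDir (bLett b hb (m - 1)) then -Pi.single (bVtx b hb m) (1 : ℝ) else 0)
  + (if 1 ≤ m ∧ ¬isDir (bLett b hb m) then Pi.single (bVtx b hb (m + 1)) (1 : ℝ) else 0)
  + (if ¬isDir (bLett b hb (b.length - 1)) then Pi.single (bVtx b hb (b.length - 1)) (1 : ℝ)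
     else 0)
  + ∑ i ∈ Finset.Icc 2 m, epsCoef b hb i • (Pi.single (bVtx b hb (i - 1)) (1 : ℝ) : Q.V → ℝ)



section Echelon

variable {K : Type} [Field K] {S : Type} [Fintype S] [LinearOrder S]

/-- The set of pivot (leading-coordinate) positions of a subspace of `S → K`. -/
def pivSet (K : Type) [Field K] {S : Type} [Fintype S] [LinearOrder S]
    (V : Submodule K (S → K)) : Set S :=
  {p | ∃ v ∈ V, v p ≠ 0 ∧ ∀ q, p < q → v q = 0}

lemma exists_piv {V : Submodule K (S → K)} {v : S → K} (hv : v ∈ V) (hne : v ≠ 0) :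
    ∃ p ∈ pivSet K V, v p ≠ 0 := by
  classical
  have hne' : (Finset.univ.filter fun q => v q ≠ 0).Nonempty := by
    rcases Function.ne_iff.mp hne with ⟨q, hq⟩
    exact ⟨q, Finset.mem_filter.mpr ⟨Finset.mem_univ _, by simpa using hq⟩⟩
  set t := Finset.univ.filter fun q => v q ≠ 0 with ht
  have hmem := t.max'_mem hne'
  have hvp : v (t.max' hne') ≠ 0 := (Finset.mem_filter.mp hmem).2
  refine ⟨t.max' hne', ⟨v, hv, hvp, ?_⟩, hvp⟩
  intro q hq
  by_contra h
  have hqt : q ∈ t := Finset.mem_filter.mpr ⟨Finset.mem_univ _, h⟩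
  exact absurd (t.le_max' q hqt) (not_le.mpr hq)

lemma finrank_le_card_piv (V : Submodule K (S → K)) :
    Module.finrank K V ≤ Fintype.card (pivSet K V) := by
  classical
  set f := (LinearMap.funLeft K K (Subtype.val : pivSet K V → S)).comp V.subtype with hf
  have hinj : Function.Injective f := by
    rw [← LinearMap.ker_eq_bot, Submodule.eq_bot_iff]
    intro x hx
    rw [LinearMap.mem_ker] at hx
    by_contra hxne
    have hne : (x : S → K) ≠ 0 := by
      intro h0
      exact hxne (Subtype.ext h0)
    obtain ⟨p, hp, hvp⟩ := exists_piv x.2 hne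
    have : (x : S → K) p = 0 := congrFun hx ⟨p, hp⟩
    exact hvp this
  have := LinearMap.finrank_le_finrank_of_injective hinj
  simpa [Module.finrank_pi] using this

lemma card_piv_le_finrank (V : Submodule K (S → K)) :
    Fintype.card (pivSet K V) ≤ Module.finrank K V := by
  classical
  have hch : ∀ p : pivSet K V, ∃ v, v ∈ V ∧ v p.1 ≠ 0 ∧ ∀ q, p.1 < q → v q = 0 := by
    intro p; rcases p.2 with ⟨v, hv, h1, h2⟩; exact ⟨v, hv, h1, h2⟩
  choose v hvV hvne hvz using hch
  have hli : LinearIndependent K v := by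
    rw [linearIndependent_iff']
    intro t g hsum i hi
    by_contra hgi
    have hne : (t.filter fun p => g p ≠ 0).Nonempty := ⟨i, by simp [hi, hgi]⟩
    set t' := t.filter fun p => g p ≠ 0 with ht'
    have hpt := t'.max'_mem hne
    set p := t'.max' hne with hp
    rw [ht', Finset.mem_filter] at hpt
    have h0 := congrFun hsum p.1
    rw [Finset.sum_apply] at h0
    have h2 : ∀ j ∈ t, j ≠ p → (g j • v j) p.1 = 0 := by
      intro j hj hjp
      by_cases hgj : g j = 0
      · simp [hgj]
      · have hjt' : j ∈ t' := by rw [ht', Finset.mem_filter]; exact ⟨hj, hgj⟩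
        have hlt : j < p := lt_of_le_of_ne (t'.le_max' j hjt') hjp
        have : v j p.1 = 0 := hvz j p.1 (Subtype.coe_lt_coe.mpr hlt)
        simp [this]
    have hfin : (g p • v p) p.1 = 0 := by
      rw [Finset.sum_eq_single_of_mem p hpt.1 h2] at h0
      simpa using h0
    have : g p * v p p.1 = 0 := by simpa using hfin
    rcases mul_eq_zero.mp this with h | h
    · exact hpt.2 h
    · exact hvne p h
  have hli' : LinearIndependent K (fun p : pivSet K V => (⟨v p, hvV p⟩ : V)) := by
    apply LinearIndependent.of_comp V.subtype
    convert hli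
    rfl
  exact hli'.fintype_card_le_finrank

lemma finrank_span_piv_single [DecidableEq S] (V : Submodule K (S → K)) :
    Module.finrank K ↥(Submodule.span K {f : S → K | ∃ p ∈ pivSet K V, f = Pi.single p 1})
      = Module.finrank K V := by
  have hset : {f : S → K | ∃ p ∈ pivSet K V, f = Pi.single p 1}
      = Set.range (fun p : pivSet K V => Pi.single (p : S) (1 : K)) := by
    ext f
    constructor
    · rintro ⟨p, hp, rfl⟩; exact ⟨⟨p, hp⟩, rfl⟩
    · rintro ⟨p, rfl⟩; exact ⟨p.1, p.2, rfl⟩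
  rw [hset]
  have hli : LinearIndependent K (fun p : pivSet K V => (Pi.single (p : S) (1 : K) : S → K)) := by
    rw [linearIndependent_iff']
    intro t g hsum i hi
    have h0 := congrFun hsum i.1
    rw [Finset.sum_apply] at h0
    have hz : ∀ j ∈ t, j ≠ i → (g j • (Pi.single (j : S) (1 : K) : S → K)) i.1 = 0 := by
      intro j hj hne
      have hne' : (i : S) ≠ (j : S) := fun h => hne (Subtype.ext h.symm)
      simp [Pi.single_eq_of_ne hne']
    rw [Finset.sum_eq_single_of_mem i hi hz] at h0
    simpa using h0
  rw [finrank_span_eq_card hli]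
  exact le_antisymm (card_piv_le_finrank V) (finrank_le_card_piv V)

end Echelon

section StringLemmas

variable {Q : FinQuiver}

lemma red_pair {l : List (Letter Q)} (hr : WordReduced l) :
    ∀ (i : ℕ) (c d : Letter Q), l[i]? = some c → l[i + 1]? = some d → d ≠ linv c := by
  induction l with
  | nil => intro i c d h _; simp at h
  | cons a l ih =>
    intro i c d hc hd
    cases l with
    | nil =>
      rcases i with _ | i <;> simp at hd
    | cons b l' =>
      obtain ⟨h1, h2⟩ : b ≠ linv a ∧ WordReduced (b :: l') := hr
      cases i with
      | zero =>
        simp only [List.getElem?_cons_zero, Option.some_inj] at hc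
        simp only [List.getElem?_cons_succ, List.getElem?_cons_zero, Option.some_inj] at hd
        subst hc; subst hd; exact h1
      | succ i' =>
        rw [List.getElem?_cons_succ] at hc hd
        exact ih h2 i' c d hc hd

lemma comp_pair {l : List (Letter Q)} (hc : WordComposable l) :
    ∀ (i : ℕ) (c d : Letter Q), l[i]? = some c → l[i + 1]? = some d → ltgt c = lsrc d := by
  induction l with
  | nil => intro i c d h _; simp at h
  | cons a l ih =>
    intro i c d h1 h2
    cases l with
    | nil =>
      rcases i with _ | i <;> simp at h2
    | cons b l' =>
      obtain ⟨hab, hrest⟩ : ltgt a = lsrc b ∧ WordComposable (b :: l') := hc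
      cases i with
      | zero =>
        simp only [List.getElem?_cons_zero, Option.some_inj] at h1
        simp only [List.getElem?_cons_succ, List.getElem?_cons_zero, Option.some_inj] at h2
        subst h1; subst h2; exact hab
      | succ i' =>
        rw [List.getElem?_cons_succ] at h1 h2
        exact ih hrest i' c d h1 h2

lemma wVtx_succ {w : List (Letter Q)} (hw : w ≠ []) {j : ℕ} {c : Letter Q}
    (h : w[j]? = some c) : wVtx w hw (j + 1) = ltgt c := by
  have hj : j < w.length := by
    by_contra h'
    rw [List.getElem?_eq_none (le_of_not_gt h')] at h
    simp at h
  obtain ⟨hj', hget⟩ := List.getElem?_eq_some_iff.mp h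
  unfold wVtx
  simp only [Nat.succ_ne_zero, if_false, Nat.add_sub_cancel]
  rw [List.getD_eq_getElem _ _ hj, hget]

lemma wVtx_get {w : List (Letter Q)} (hw : w ≠ []) (hcomp : WordComposable w) {j : ℕ}
    {c : Letter Q} (h : w[j]? = some c) : wVtx w hw j = lsrc c := by
  cases j with
  | zero =>
    obtain ⟨hj', hget⟩ := List.getElem?_eq_some_iff.mp h
    have hh : w.head hw = c := by rw [List.head_eq_getElem, hget]
    simp [wVtx, hh]
  | succ j' =>
    have hj : j' + 1 < w.length := (List.getElem?_eq_some_iff.mp h).1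
    have hj' : j' < w.length := by omega
    have hc' : w[j']? = some w[j'] := List.getElem?_eq_getElem hj'
    rw [wVtx_succ hw hc']
    exact comp_pair hcomp j' _ _ hc' h

lemma stepsTo_facts {w : List (Letter Q)} (hw : w ≠ []) (hcomp : WordComposable w)
    {a : Q.A} {j k : ℕ} (h : stepsTo w a j k) :
    j < w.length + 1 ∧ k < w.length + 1 ∧ wVtx w hw j = Q.s a ∧ wVtx w hw k = Q.t a := by
  rcases h with ⟨rfl, h⟩ | ⟨rfl, h⟩
  · have hj : j < w.length := (List.getElem?_eq_some_iff.mp h).1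
    exact ⟨by omega, by omega, wVtx_get hw hcomp h, wVtx_succ hw h⟩
  · have hk : k < w.length := (List.getElem?_eq_some_iff.mp h).1
    exact ⟨by omega, by omega, wVtx_succ hw h, wVtx_get hw hcomp h⟩

lemma stepsTo_uniq_img {w : List (Letter Q)} (hr : WordReduced w) {a : Q.A} {j k k' : ℕ}
    (h1 : stepsTo w a j k) (h2 : stepsTo w a j k') : k = k' := by
  rcases h1 with ⟨rfl, h1⟩ | ⟨rfl, h1⟩ <;> rcases h2 with ⟨h2e, h2⟩ | ⟨h2e, h2⟩
  · omega
  · -- k' + 1 = j ... j = k'+1, w[j]? = inl a, w[k']? = inr a and k'+1 = j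
    exfalso
    subst h2e
    exact red_pair hr k' _ _ h2 h1 rfl
  · exfalso
    exact red_pair hr k _ _ h1 h2 rfl
  · omega

lemma stepsTo_mono {w : List (Letter Q)} (hr : WordReduced w) {a : Q.A} {x x' y y' : ℕ}
    (h1 : stepsTo w a x x') (h2 : stepsTo w a y y') (hxy : x < y) : x' < y' := by
  rcases h1 with ⟨rfl, h1⟩ | ⟨rfl, h1⟩ <;> rcases h2 with ⟨rfl, h2⟩ | ⟨rfl, h2⟩
  · omega
  · -- x' = x+1, y = y'+1, w[x]? = inl a, w[y']? = inr a
    by_contra h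
    have : y' = x ∨ y' = x + 1 := by omega
    rcases this with rfl | rfl
    · rw [h1] at h2; simp at h2
    · exact red_pair hr x _ _ h1 h2 rfl
  · omega
  · omega

lemma stepsTo_uniq_pre {w : List (Letter Q)} (hr : WordReduced w) {a : Q.A} {j j' k : ℕ}
    (h1 : stepsTo w a j k) (h2 : stepsTo w a j' k) : j = j' := by
  rcases lt_trichotomy j j' with h | h | h
  · exact absurd (stepsTo_mono hr h1 h2 h) (lt_irrefl k)
  · exact h
  · exact absurd (stepsTo_mono hr h2 h1 h) (lt_irrefl k)

end StringLemmas

section PivStep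

variable {K : Type} [Field K] {Q : FinQuiver} {w : List (Letter Q)}

lemma step_piv (hw : w ≠ []) (hred : WordReduced w)
    (L : QSubRep (stringRep K Q w hw)) (a : Q.A)
    (j k : Fin (w.length + 1)) (hjk : stepsTo w a (j : ℕ) (k : ℕ))
    (hj : wVtx w hw (j : ℕ) = Q.s a) (hk : wVtx w hw (k : ℕ) = Q.t a)
    (hmem : (⟨j, hj⟩ : {p : Fin (w.length + 1) // wVtx w hw (p : ℕ) = Q.s a}) ∈
      pivSet K (L.L (Q.s a))) :
    (⟨k, hk⟩ : {p : Fin (w.length + 1) // wVtx w hw (p : ℕ) = Q.t a}) ∈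
      pivSet K (L.L (Q.t a)) := by
  obtain ⟨v, hvL, hvne, hvmax⟩ := hmem
  set u := (stringRep K Q w hw).φ a v with hu
  have huL : u ∈ L.L (Q.t a) := L.compat a v hvL
  have hval : ∀ p : {p : Fin (w.length + 1) // wVtx w hw (p : ℕ) = Q.t a},
      u p = ∑ q : {p : Fin (w.length + 1) // wVtx w hw (p : ℕ) = Q.s a},
        (if stepsTo w a (q.1 : ℕ) (p.1 : ℕ) then (1 : K) else 0) * v q := by
    intro p
    rw [hu]
    show (Matrix.mulVecLin _ v) p = _
    rfl
  refine ⟨u, huL, ?_, ?_⟩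
  · rw [hval]
    rw [Finset.sum_eq_single_of_mem (⟨j, hj⟩ :
        {p : Fin (w.length + 1) // wVtx w hw (p : ℕ) = Q.s a}) (Finset.mem_univ _)]
    · rw [if_pos hjk, one_mul]; exact hvne
    · intro q _ hq
      rw [if_neg, zero_mul]
      intro hstepq
      apply hq
      apply Subtype.ext; apply Fin.ext
      exact stepsTo_uniq_pre hred hstepq hjk
  · intro p hp
    have hkp : (k : ℕ) < ((p.1 : Fin (w.length + 1)) : ℕ) := hp
    rw [hval]
    apply Finset.sum_eq_zero
    intro q _
    by_cases hstepq : stepsTo w a (q.1 : ℕ) (p.1 : ℕ)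
    · rcases lt_trichotomy ((q.1 : Fin (w.length + 1)) : ℕ) (j : ℕ) with h | h | h
      · have := stepsTo_mono hred hstepq hjk h
        omega
      · have : ((p.1 : Fin (w.length + 1)) : ℕ) = (k : ℕ) := by
          apply stepsTo_uniq_img hred (a := a) (j := (q.1 : ℕ))
          · exact hstepq
          · rw [h]; exact hjk
        omega
      · have hlt : (⟨j, hj⟩ : {p : Fin (w.length + 1) // wVtx w hw (p : ℕ) = Q.s a}) < q :=
          h
        rw [hvmax q hlt, mul_zero]
    · rw [if_neg hstepq, zero_mul]

/-- The union over vertices of the pivot sets of a subrepresentation of a string module. -/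
def pivJ (K : Type) [Field K] {Q : FinQuiver} {w : List (Letter Q)} (hw : w ≠ [])
    (L : QSubRep (stringRep K Q w hw)) : Set (Fin (w.length + 1)) :=
  {j | ∃ (i : Q.V) (hj : wVtx w hw (j : ℕ) = i),
    (⟨j, hj⟩ : {p : Fin (w.length + 1) // wVtx w hw (p : ℕ) = i}) ∈ pivSet K (L.L i)}

lemma pivJ_step (hw : w ≠ []) (hred : WordReduced w) (hcomp : WordComposable w)
    (L : QSubRep (stringRep K Q w hw)) (a : Q.A) (j k : Fin (w.length + 1))
    (hjk : stepsTo w a (j : ℕ) (k : ℕ)) (hj : j ∈ pivJ K hw L) : k ∈ pivJ K hw L := by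
  obtain ⟨i, hji, hmem⟩ := hj
  obtain ⟨_, _, hjv, hkv⟩ := stepsTo_facts hw hcomp hjk
  have hieq : i = Q.s a := hji.symm.trans hjv
  subst hieq
  exact ⟨Q.t a, hkv, step_piv hw hred L a j k hjk hji hkv hmem⟩

end PivStep

/-- Every subrepresentation of a string module over a special biserial
algebra can be replaced by one of the same dimension vector which is spanned at every
vertex by standard basis vectors, indexed by a subset `J` defining a subrepresentation of
the thin representation `T(w)`. -/
theorem subrep_of_string_module_dediagonalised
    (K : Type) [Field K] [IsAlgClosed K] (Q : FinQuiver) (D : BoundQuiver Q)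
    (hsb : SpecialBiserial D) (w : List (Letter Q)) (hw : IsString D w)
    (L : QSubRep (stringRep K Q w hw.ne)) :
    ∃ (Lt : QSubRep (stringRep K Q w hw.ne)) (J : Set (Fin (w.length + 1))),
      (∀ j : Fin w.length, (stringQuiver Q w).s j ∈ J → (stringQuiver Q w).t j ∈ J) ∧
      (∀ i : Q.V, Lt.L i = Submodule.span K
        {f : {j : Fin (w.length + 1) // wVtx w hw.ne j = i} → K |
          ∃ (j : Fin (w.length + 1)) (hj : wVtx w hw.ne j = i), j ∈ J ∧
            f = Pi.single (⟨j, hj⟩ : {j : Fin (w.length + 1) // wVtx w hw.ne j = i})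
              (1 : K)}) ∧
      ∀ i, Module.finrank K (Lt.L i) = Module.finrank K (L.L i) := by
  set J : Set (Fin (w.length + 1)) := pivJ K hw.ne L with hJ
  have hstepJ : ∀ (a : Q.A) (j k : Fin (w.length + 1)),
      stepsTo w a (j : ℕ) (k : ℕ) → j ∈ J → k ∈ J :=
    fun a j k h => pivJ_step hw.ne hw.red hw.comp L a j k h
  refine ⟨⟨fun i => Submodule.span K
    {f : {j : Fin (w.length + 1) // wVtx w hw.ne j = i} → K |
      ∃ (j : Fin (w.length + 1)) (hj : wVtx w hw.ne j = i), j ∈ J ∧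
        f = Pi.single (⟨j, hj⟩ : {j : Fin (w.length + 1) // wVtx w hw.ne j = i}) (1 : K)},
    ?_⟩, J, ?_, fun i => rfl, ?_⟩
  · -- compatibility
    intro a x hx
    have hsub : Submodule.span K
        {f : {j : Fin (w.length + 1) // wVtx w hw.ne j = Q.s a} → K |
          ∃ (j : Fin (w.length + 1)) (hj : wVtx w hw.ne j = Q.s a), j ∈ J ∧
            f = Pi.single (⟨j, hj⟩ :
              {j : Fin (w.length + 1) // wVtx w hw.ne j = Q.s a}) (1 : K)} ≤
        (Submodule.span K
          {f : {j : Fin (w.length + 1) // wVtx w hw.ne j = Q.t a} → K |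
            ∃ (j : Fin (w.length + 1)) (hj : wVtx w hw.ne j = Q.t a), j ∈ J ∧
              f = Pi.single (⟨j, hj⟩ :
                {j : Fin (w.length + 1) // wVtx w hw.ne j = Q.t a}) (1 : K)}).comap
          ((stringRep K Q w hw.ne).φ a) := by
      refine Submodule.span_le.mpr ?_
      rintro f ⟨j, hj, hjJ, rfl⟩
      show (stringRep K Q w hw.ne).φ a _ ∈ Submodule.span K
          {f : {j : Fin (w.length + 1) // wVtx w hw.ne j = Q.t a} → K |
            ∃ (j : Fin (w.length + 1)) (hj : wVtx w hw.ne j = Q.t a), j ∈ J ∧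
              f = Pi.single (⟨j, hj⟩ :
                {j : Fin (w.length + 1) // wVtx w hw.ne j = Q.t a}) (1 : K)}
      by_cases hex : ∃ m : ℕ, stepsTo w a (j : ℕ) m
      · obtain ⟨m, hm⟩ := hex
        obtain ⟨hjlt, hmlt, hjv, hmv⟩ := stepsTo_facts hw.ne hw.comp hm
        set kF : Fin (w.length + 1) := ⟨m, hmlt⟩ with hkF
        have hmF : stepsTo w a (j : ℕ) (kF : ℕ) := hm
        have himg : (stringRep K Q w hw.ne).φ a
            (Pi.single (⟨j, hj⟩ : {j : Fin (w.length + 1) // wVtx w hw.ne j = Q.s a}) 1) =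
            Pi.single (⟨kF, hmv⟩ : {p : Fin (w.length + 1) // wVtx w hw.ne p = Q.t a}) 1 := by
          show (Matrix.mulVecLin _) _ = _
          erw [Matrix.mulVecLin_apply, Matrix.mulVec_single_one]
          funext p
          by_cases hpk : p = ⟨kF, hmv⟩
          · subst hpk
            rw [Pi.single_eq_same]
            show (if stepsTo w a (j : ℕ) ((kF : Fin (w.length + 1)) : ℕ) then (1 : K) else 0)
              = 1
            rw [if_pos hmF]
          · rw [Pi.single_eq_of_ne hpk]
            show (if stepsTo w a (j : ℕ) ((p.1 : Fin (w.length + 1)) : ℕ) then (1 : K) else 0)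
              = 0
            rw [if_neg]
            intro hstepp
            apply hpk
            apply Subtype.ext; apply Fin.ext
            exact stepsTo_uniq_img hw.red hstepp hmF
        exact himg ▸ Submodule.subset_span ⟨kF, hmv, hstepJ a j kF hmF hjJ, rfl⟩
      · push_neg at hex
        have himg : (stringRep K Q w hw.ne).φ a
            (Pi.single (⟨j, hj⟩ : {j : Fin (w.length + 1) // wVtx w hw.ne j = Q.s a}) 1)
            = 0 := by
          show (Matrix.mulVecLin _) _ = _
          erw [Matrix.mulVecLin_apply, Matrix.mulVec_single_one]
          funext p
          show (if stepsTo w a (j : ℕ) ((p.1 : Fin (w.length + 1)) : ℕ) then (1 : K) else 0)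
            = 0
          rw [if_neg (hex _)]
        exact himg ▸ Submodule.zero_mem _
    exact hsub hx
  · -- closure of J
    intro j0 hs
    cases hc : w.get j0 with
    | inl a =>
      rw [List.get_eq_getElem] at hc
      have hsv : (stringQuiver Q w).s j0 = j0.castSucc := by simp [stringQuiver, hc]
      have htv : (stringQuiver Q w).t j0 = j0.succ := by simp [stringQuiver, hc]
      rw [hsv] at hs; rw [htv]
      refine hstepJ a j0.castSucc j0.succ (Or.inl ⟨?_, ?_⟩) hs
      · simp
      · have hg : w[(j0 : ℕ)]? = some (w.get j0) := by
          exact List.getElem?_eq_getElem j0.isLt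
        rw [Fin.coe_castSucc, hg, List.get_eq_getElem, hc]
    | inr a =>
      rw [List.get_eq_getElem] at hc
      have hsv : (stringQuiver Q w).s j0 = j0.succ := by simp [stringQuiver, hc]
      have htv : (stringQuiver Q w).t j0 = j0.castSucc := by simp [stringQuiver, hc]
      rw [hsv] at hs; rw [htv]
      refine hstepJ a j0.succ j0.castSucc (Or.inr ⟨?_, ?_⟩) hs
      · simp
      · have hg : w[(j0 : ℕ)]? = some (w.get j0) := by
          exact List.getElem?_eq_getElem j0.isLt
        rw [Fin.coe_castSucc, hg, List.get_eq_getElem, hc]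
  · -- dimensions
    intro i
    have hset : {f : {j : Fin (w.length + 1) // wVtx w hw.ne j = i} → K |
        ∃ (j : Fin (w.length + 1)) (hj : wVtx w hw.ne j = i), j ∈ J ∧
          f = Pi.single (⟨j, hj⟩ : {j : Fin (w.length + 1) // wVtx w hw.ne j = i}) (1 : K)}
        = {f | ∃ p ∈ pivSet K (L.L i), f = Pi.single p 1} := by
      ext f
      constructor
      · rintro ⟨j, hj, ⟨i', hj', hmem⟩, rfl⟩
        have hii : i' = i := hj'.symm.trans hj
        subst hii
        exact ⟨⟨j, hj⟩, hmem, rfl⟩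
      · rintro ⟨p, hp, rfl⟩
        exact ⟨p.1, p.2, ⟨i, p.2, hp⟩, rfl⟩
    show Module.finrank K ↥(Submodule.span K
      {f : {j : Fin (w.length + 1) // wVtx w hw.ne j = i} → K |
        ∃ (j : Fin (w.length + 1)) (hj : wVtx w hw.ne j = i), j ∈ J ∧
          f = Pi.single (⟨j, hj⟩ : {j : Fin (w.length + 1) // wVtx w hw.ne j = i}) (1 : K)})
      = Module.finrank K ↥(L.L i)
    rw [hset]
    exact @finrank_span_piv_single K _ _ _ _ _ (L.L i)
end

section
/- Let Q be a finite quiver, K a field, and let M and N be nonzero representations of Q over K such that N admits a filtration 0 = N_0 ⊂ N_1 ⊂ ⋯ ⊂ N_t = N by subrepresentations with N_k/N_{k−1} ≅ M for every 1 ≤ k ≤ t. Then D(N) = D(M). -/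
attribute [local instance] Classical.propDecidable

section AuxiliaryLemmas

open Module Submodule

variable {K : Type} [Field K]

lemma finrank_comap_subtype' {V : Type} [AddCommGroup V] [Module K V]
    (A B : Submodule K V) :
    finrank K ↥(B.comap A.subtype) = finrank K ↥(B ⊓ A) := by
  have e : B.comap A.subtype = (B ⊓ A).comap A.subtype := by
    simp [Submodule.comap_inf, Submodule.comap_subtype_self]
  rw [e]
  exact (Submodule.comapSubtypeEquivOfLe inf_le_right).finrank_eq

lemma finrank_comap_subtype_of_le' {V : Type} [AddCommGroup V] [Module K V]
    {A B : Submodule K V} (h : B ≤ A) :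
    finrank K ↥(B.comap A.subtype) = finrank K ↥B :=
  (Submodule.comapSubtypeEquivOfLe h).finrank_eq

lemma finrank_map_mkQ' {V : Type} [AddCommGroup V] [Module K V] [FiniteDimensional K V]
    (B A : Submodule K V) :
    finrank K ↥(A.map B.mkQ) + finrank K ↥(B ⊓ A) = finrank K ↥A := by
  have h := LinearMap.finrank_range_add_finrank_ker (B.mkQ.comp A.subtype)
  rw [LinearMap.range_comp, Submodule.range_subtype, LinearMap.ker_comp, Submodule.ker_mkQ,
    finrank_comap_subtype'] at h
  exact h

lemma finrank_comap_mkQ' {V : Type} [AddCommGroup V] [Module K V] [FiniteDimensional K V]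
    (B : Submodule K V) (L : Submodule K (V ⧸ B)) :
    finrank K ↥(L.comap B.mkQ) = finrank K ↥L + finrank K ↥B := by
  have hB : B ≤ L.comap B.mkQ := by
    intro x hx
    have hx0 : B.mkQ x = 0 := by
      simpa [Submodule.mkQ_apply] using (Submodule.Quotient.mk_eq_zero B).2 hx
    simp [Submodule.mem_comap, hx0]
  have h := LinearMap.finrank_range_add_finrank_ker (B.mkQ.comp (L.comap B.mkQ).subtype)
  rw [LinearMap.range_comp, Submodule.range_subtype, LinearMap.ker_comp, Submodule.ker_mkQ,
    Submodule.map_comap_eq, Submodule.range_mkQ, top_inf_eq,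
    finrank_comap_subtype_of_le' hB] at h
  omega

lemma finrank_quot_of_le' {V : Type} [AddCommGroup V] [Module K V] [FiniteDimensional K V]
    {A B : Submodule K V} (h : B ≤ A) :
    finrank K (↥A ⧸ B.comap A.subtype) + finrank K ↥B = finrank K ↥A := by
  have hq := Submodule.finrank_quotient_add_finrank (B.comap A.subtype)
  rwa [finrank_comap_subtype_of_le' h] at hq

lemma fin_telescope' {t : ℕ} (g : Fin (t + 1) → ℝ) :
    ∑ j : Fin t, (g j.succ - g j.castSucc) = g (Fin.last t) - g 0 := by
  induction t with
  | zero => simp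
  | succ n ih =>
    rw [Fin.sum_univ_castSucc]
    have h := ih (fun k => g k.castSucc)
    simp only [Fin.succ_castSucc] at h ⊢
    rw [h, Fin.succ_last, Fin.castSucc_zero]
    ring

lemma repIso_symm' {Q : FinQuiver} {R R' : QRep K Q} (h : RepIso R R') : RepIso R' R := by
  obtain ⟨f, hf⟩ := h
  refine ⟨fun i => (f i).symm, fun a x => ?_⟩
  apply (f (Q.t a)).injective
  rw [LinearEquiv.apply_symm_apply, hf a ((f (Q.s a)).symm x), LinearEquiv.apply_symm_apply]

lemma repIso_transport' {Q : FinQuiver} {R R' : QRep K Q} (h : RepIso R R') (S : QSubRep R) :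
    ∃ S' : QSubRep R', ∀ i, finrank K ↥(S'.L i) = finrank K ↥(S.L i) := by
  obtain ⟨f, hf⟩ := h
  refine ⟨⟨fun i => (S.L i).map (f i).toLinearMap, ?_⟩,
    fun i => LinearEquiv.finrank_map_eq _ _⟩
  intro a x hx
  rw [Submodule.mem_map] at hx ⊢
  obtain ⟨y, hy, rfl⟩ := hx
  exact ⟨R.φ a y, S.compat a y hy, hf a y⟩

end AuxiliaryLemmas

/-- If the nonzero representation `N` admits a filtration all of whose
successive quotients are isomorphic to the nonzero representation `M`, then
`D(N) = D(M)`. -/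
theorem stability_space_of_filtered_module
    (K : Type) [Field K] (Q : FinQuiver) (M N : QRep K Q)
    (hM : ∃ i, Module.finrank K (M.M i) ≠ 0) (hN : ∃ i, Module.finrank K (N.M i) ≠ 0)
    (t : ℕ) (F : Fin (t + 1) → QSubRep N)
    (h0 : ∀ i, (F 0).L i = ⊥) (hlast : ∀ i, (F (Fin.last t)).L i = ⊤)
    (hmono : ∀ j : Fin t, QSubRep.le (F j.castSucc) (F j.succ))
    (hfac : ∀ j : Fin t, RepIso (quotRep N (F j.castSucc) (F j.succ) (hmono j)) M) :
    stabSpace N = stabSpace M := by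
  classical
  -- each quotient factor has the dimension vector of M
  have hquotdim : ∀ (j : Fin t) (i : Q.V),
      Module.finrank K ((F j.succ).L i) =
        Module.finrank K (M.M i) + Module.finrank K ((F j.castSucc).L i) := by
    intro j i
    have h1 := finrank_quot_of_le' (K := K) (hmono j i)
    have h2 : Module.finrank K
        ((quotRep N (F j.castSucc) (F j.succ) (hmono j)).M i) = Module.finrank K (M.M i) := by
      obtain ⟨f, -⟩ := hfac j
      exact (f i).finrank_eq
    have h2' : Module.finrank K
        (↥((F j.succ).L i) ⧸ Submodule.comap ((F j.succ).L i).subtype ((F j.castSucc).L i))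
        = Module.finrank K (M.M i) := h2
    omega
  -- dimensions along the filtration
  have hdim : ∀ k : Fin (t + 1), ∀ i : Q.V,
      Module.finrank K ((F k).L i) = (k : ℕ) * Module.finrank K (M.M i) := by
    intro k
    induction k using Fin.induction with
    | zero => intro i; simp [h0 i]
    | succ j ih =>
      intro i
      have h1 := hquotdim j i
      have h2 := ih i
      have hv : ((j.succ : Fin (t + 1)) : ℕ) = (j : ℕ) + 1 := rfl
      have hv2 : ((j.castSucc : Fin (t + 1)) : ℕ) = (j : ℕ) := rfl
      rw [hv]
      rw [hv2] at h2
      rw [h1, h2]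
      ring
  have hNdim : ∀ i, Module.finrank K (N.M i) = t * Module.finrank K (M.M i) := by
    intro i
    have h1 := hdim (Fin.last t) i
    rw [hlast i, finrank_top] at h1
    simpa using h1
  have ht : 0 < t := by
    rcases Nat.eq_zero_or_pos t with h | h
    · obtain ⟨i, hi⟩ := hN
      exact absurd (by simp [hNdim i, h]) hi
    · exact h
  have hInnerN : ∀ v : Q.V → ℝ, stabInner v N.dimVec = (t : ℝ) * stabInner v M.dimVec := by
    intro v
    simp only [stabInner, QRep.dimVec, Finset.mul_sum]
    refine Finset.sum_congr rfl fun i _ => ?_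
    rw [hNdim i]
    push_cast
    ring
  ext v
  simp only [stabSpace, Set.mem_setOf_eq, IsSemistable]
  constructor
  · rintro ⟨hz, hs⟩
    have htR : (t : ℝ) ≠ 0 := Nat.cast_ne_zero.mpr ht.ne'
    have hz' : stabInner v M.dimVec = 0 := by
      have h1 := hInnerN v
      rw [hz] at h1
      rcases mul_eq_zero.mp h1.symm with h | h
      · exact absurd h htR
      · exact h
    refine ⟨hz', fun L => ?_⟩
    set j0 : Fin t := ⟨0, ht⟩ with hj0
    obtain ⟨L', hL'⟩ := repIso_transport' (repIso_symm' (hfac j0)) L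
    have hcs : j0.castSucc = (0 : Fin (t + 1)) := rfl
    set B : ∀ i, Submodule K ↥((F j0.succ).L i) :=
      fun i => Submodule.comap ((F j0.succ).L i).subtype ((F j0.castSucc).L i) with hB
    have hBbot : ∀ i, B i = ⊥ := by
      intro i
      rw [hB]
      simp only [hcs, h0 i, Submodule.comap_bot, Submodule.ker_subtype]
    have Tcompat : ∀ a : Q.A, ∀ x ∈ ((L'.L (Q.s a)).comap (B (Q.s a)).mkQ).map
          ((F j0.succ).L (Q.s a)).subtype,
        N.φ a x ∈ ((L'.L (Q.t a)).comap (B (Q.t a)).mkQ).map ((F j0.succ).L (Q.t a)).subtype := by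
      intro a x hx
      rw [Submodule.mem_map] at hx ⊢
      obtain ⟨y, hy, rfl⟩ := hx
      replace hy : (B (Q.s a)).mkQ y ∈ L'.L (Q.s a) := hy
      refine ⟨(N.φ a).restrict (fun z hz => (F j0.succ).compat a z hz) y, ?_, ?_⟩
      · show (B (Q.t a)).mkQ _ ∈ L'.L (Q.t a)
        have hc := L'.compat a ((B (Q.s a)).mkQ y) hy
        have heq : (quotRep N (F j0.castSucc) (F j0.succ) (hmono j0)).φ a ((B (Q.s a)).mkQ y)
            = (B (Q.t a)).mkQ ((N.φ a).restrict (fun z hz => (F j0.succ).compat a z hz) y) := by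
          simp [quotRep, Submodule.mkQ_apply, Submodule.mapQ_apply]
          rfl
        rwa [heq] at hc
      · simp [LinearMap.restrict_apply]
    have hle := hs ⟨fun i => ((L'.L i).comap (B i).mkQ).map ((F j0.succ).L i).subtype, Tcompat⟩
    have hTdim : ∀ i, Module.finrank K
          ↥(((L'.L i).comap (B i).mkQ).map ((F j0.succ).L i).subtype)
        = Module.finrank K ↥(L.L i) := by
      intro i
      have hb0 : Module.finrank K ↥(B i) = 0 := by rw [hBbot i]; exact finrank_bot K _
      rw [Submodule.finrank_map_subtype_eq]
      have hcm := finrank_comap_mkQ' (K := K) (B i) (L'.L i)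
      exact hcm.trans (by rw [hb0, add_zero]; exact hL' i)
    have heq2 : stabInner v (fun i => Module.finrank K ↥(L.L i))
        = stabInner v (fun i =>
            Module.finrank K ↥(((L'.L i).comap (B i).mkQ).map ((F j0.succ).L i).subtype)) := by
      simp only [stabInner]
      exact Finset.sum_congr rfl fun i _ => by rw [hTdim i]
    rw [heq2]
    exact hle
  · rintro ⟨hz, hs⟩
    refine ⟨by rw [hInnerN v, hz, mul_zero], fun S => ?_⟩
    have Sqcompat : ∀ j : Fin t, ∀ a : Q.A,
        ∀ x ∈ ((S.L (Q.s a)).comap ((F j.succ).L (Q.s a)).subtype).map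
          (Submodule.comap ((F j.succ).L (Q.s a)).subtype ((F j.castSucc).L (Q.s a))).mkQ,
        (quotRep N (F j.castSucc) (F j.succ) (hmono j)).φ a x ∈
          ((S.L (Q.t a)).comap ((F j.succ).L (Q.t a)).subtype).map
            (Submodule.comap ((F j.succ).L (Q.t a)).subtype ((F j.castSucc).L (Q.t a))).mkQ := by
      intro j a x hx
      rw [Submodule.mem_map] at hx
      refine (Submodule.mem_map (f := (Submodule.comap ((F j.succ).L (Q.t a)).subtype
        ((F j.castSucc).L (Q.t a))).mkQ)).mpr ?_
      obtain ⟨y, hy, rfl⟩ := hx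
      rw [Submodule.mem_comap] at hy
      refine ⟨(N.φ a).restrict (fun z hz => (F j.succ).compat a z hz) y, ?_, ?_⟩
      · rw [Submodule.mem_comap]
        simpa [LinearMap.restrict_apply] using S.compat a _ hy
      · simp [quotRep, Submodule.mkQ_apply, Submodule.mapQ_apply]
        rfl
    have hd : ∀ (j : Fin t) (i : Q.V),
        Module.finrank K ↥(((S.L i).comap ((F j.succ).L i).subtype).map
          (Submodule.comap ((F j.succ).L i).subtype ((F j.castSucc).L i)).mkQ)
        + Module.finrank K ↥(S.L i ⊓ (F j.castSucc).L i)
        = Module.finrank K ↥(S.L i ⊓ (F j.succ).L i) := by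
      intro j i
      have h1 := finrank_map_mkQ'
        (Submodule.comap ((F j.succ).L i).subtype ((F j.castSucc).L i))
        ((S.L i).comap ((F j.succ).L i).subtype)
      rw [← Submodule.comap_inf,
        finrank_comap_subtype' ((F j.succ).L i) ((F j.castSucc).L i ⊓ S.L i),
        finrank_comap_subtype' ((F j.succ).L i) (S.L i)] at h1
      have habs : ((F j.castSucc).L i ⊓ S.L i) ⊓ (F j.succ).L i
          = S.L i ⊓ (F j.castSucc).L i := by
        rw [inf_eq_left.mpr (le_trans inf_le_left (hmono j i))]
        exact inf_comm _ _
      rw [habs] at h1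
      exact h1
    have key : stabInner v (fun i => Module.finrank K ↥(S.L i)) =
        ∑ j : Fin t, ∑ i, v i * (Module.finrank K
          ↥(((S.L i).comap ((F j.succ).L i).subtype).map
            (Submodule.comap ((F j.succ).L i).subtype ((F j.castSucc).L i)).mkQ) : ℝ) := by
      rw [Finset.sum_comm]
      simp only [stabInner]
      refine Finset.sum_congr rfl fun i _ => ?_
      have tel := fin_telescope' (fun k => (Module.finrank K ↥(S.L i ⊓ (F k).L i) : ℝ))
      have hA0 : Module.finrank K ↥(S.L i ⊓ (F 0).L i) = 0 := by
        rw [h0 i, inf_bot_eq]; exact finrank_bot K _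
      have hAl : Module.finrank K ↥(S.L i ⊓ (F (Fin.last t)).L i)
          = Module.finrank K ↥(S.L i) := by rw [hlast i, inf_top_eq]
      calc v i * (Module.finrank K ↥(S.L i) : ℝ)
          = v i * ∑ j : Fin t, ((Module.finrank K ↥(S.L i ⊓ (F j.succ).L i) : ℝ)
              - (Module.finrank K ↥(S.L i ⊓ (F j.castSucc).L i) : ℝ)) := by
            rw [tel, hA0, hAl]; push_cast; ring
        _ = ∑ j : Fin t, v i * (Module.finrank K
              ↥(((S.L i).comap ((F j.succ).L i).subtype).map
                (Submodule.comap ((F j.succ).L i).subtype ((F j.castSucc).L i)).mkQ) : ℝ) := by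
            rw [Finset.mul_sum]
            refine Finset.sum_congr rfl fun j _ => ?_
            congr 1
            have h3 := hd j i
            rw [← h3]
            push_cast
            ring
    rw [key]
    refine Finset.sum_nonpos fun j _ => ?_
    obtain ⟨SM, hSM⟩ := repIso_transport' (hfac j)
      ⟨fun i => ((S.L i).comap ((F j.succ).L i).subtype).map
        (Submodule.comap ((F j.succ).L i).subtype ((F j.castSucc).L i)).mkQ, Sqcompat j⟩
    have hSM' : ∀ i, Module.finrank K ↥(SM.L i) = Module.finrank K
        ↥(((S.L i).comap ((F j.succ).L i).subtype).map
          (Submodule.comap ((F j.succ).L i).subtype ((F j.castSucc).L i)).mkQ) := hSM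
    have hle := hs SM
    have heq3 : ∑ i, v i * (Module.finrank K
          ↥(((S.L i).comap ((F j.succ).L i).subtype).map
            (Submodule.comap ((F j.succ).L i).subtype ((F j.castSucc).L i)).mkQ) : ℝ)
        = stabInner v (fun i => Module.finrank K ↥(SM.L i)) := by
      simp only [stabInner]
      exact Finset.sum_congr rfl fun i _ => by rw [hSM' i]
    rw [heq3]
    exact hle
end

section
/- Let A = KQ/I be a bound quiver algebra over an algebraically closed field K, let b be a band for A and λ ∈ K^×. Then D(M(b,λ,r)) = D(M(b,λ,1)) for every integer r ≥ 1. -/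
attribute [local instance] Classical.propDecidable

section BandAux

variable {K : Type} [Field K] {Q : FinQuiver} (b : List (Letter Q)) (hb : b ≠ []) (lam : K)

lemma band_apply (m : ℕ) (a : Q.A) (x : (bandRep K Q b hb lam m).M (Q.s a))
    (p : {j : Fin b.length // bVtx b hb (j : ℕ) = Q.t a} × Fin m) :
    (bandRep K Q b hb lam m).φ a x p
      = ∑ q : {j : Fin b.length // bVtx b hb (j : ℕ) = Q.s a} × Fin m,
          bandEntry K b hb lam a (p.1.1 : ℕ) (q.1.1 : ℕ) p.2 q.2 * x q := rfl

lemma bandEntry_of_lt {m : ℕ} (a : Q.A) (k j : ℕ) {κ μ : Fin m} (h : (κ : ℕ) < (μ : ℕ)) :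
    bandEntry K b hb lam a k j κ μ = 0 := by
  have h1 : κ ≠ μ := fun e => by simp [e] at h
  have h2 : ¬((μ : ℕ) + 1 = (κ : ℕ)) := by omega
  simp [bandEntry, jordEntry, h1, h2]

lemma bandEntry_diag {m : ℕ} (a : Q.A) (k j : ℕ) (κ : Fin m) :
    bandEntry K b hb lam a k j κ κ = bandEntry K b hb lam a k j (0 : Fin 1) (0 : Fin 1) := by
  simp [bandEntry, jordEntry]

end BandAux
section BandAux2

variable {K : Type} [Field K] {Q : FinQuiver} (b : List (Letter Q)) (hb : b ≠ []) (lam : K)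

/-- Embedding of the rank-one module as the top slice. -/
noncomputable def topMap (α : Type) (r : ℕ) :
    ((α × Fin 1) → K) →ₗ[K] ((α × Fin r) → K) where
  toFun x p := if (p.2 : ℕ) = r - 1 then x (p.1, 0) else 0
  map_add' x y := by funext p; by_cases h : (p.2 : ℕ) = r - 1 <;> simp [h]
  map_smul' t x := by funext p; by_cases h : (p.2 : ℕ) = r - 1 <;> simp [h]

lemma topMap_apply {α : Type} (r : ℕ) (x : (α × Fin 1) → K) (p : α × Fin r) :
    topMap α r x p = if (p.2 : ℕ) = r - 1 then x (p.1, 0) else 0 := rfl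

lemma topMap_injective {α : Type} (r : ℕ) (hr : 1 ≤ r) :
    Function.Injective (topMap (K := K) α r) := by
  intro x y h
  funext p
  have h1 : r - 1 < r := by omega
  have := congrFun h (p.1, ⟨r - 1, h1⟩)
  rw [topMap_apply, topMap_apply, if_pos rfl, if_pos rfl] at this
  have h2 : p.2 = 0 := Subsingleton.elim _ _
  rw [show p = (p.1, p.2) from rfl, h2]
  exact this

/-- The `c`-th slice map from the rank-`r` module to the rank-one module. -/
noncomputable def sliceMap (α : Type) (r : ℕ) (c : ℕ) :
    ((α × Fin r) → K) →ₗ[K] ((α × Fin 1) → K) where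
  toFun x p := if h : c < r then x (p.1, ⟨c, h⟩) else 0
  map_add' x y := by funext p; by_cases h : c < r <;> simp [h]
  map_smul' t x := by funext p; by_cases h : c < r <;> simp [h]

lemma sliceMap_apply {α : Type} {r c : ℕ} (hc : c < r) (x : (α × Fin r) → K) (p : α × Fin 1) :
    sliceMap α r c x p = x (p.1, ⟨c, hc⟩) := dif_pos hc

end BandAux2
section BandAux3

variable {K : Type} [Field K] {Q : FinQuiver} (b : List (Letter Q)) (hb : b ≠ []) (lam : K)

lemma top_intertwine (r : ℕ) (hr : 1 ≤ r) (a : Q.A)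
    (x : (bandRep K Q b hb lam 1).M (Q.s a)) :
    (bandRep K Q b hb lam r).φ a (topMap _ r x)
      = topMap _ r ((bandRep K Q b hb lam 1).φ a x) := by
  have hlt : r - 1 < r := by omega
  funext p
  erw [band_apply, topMap_apply]
  rw [Fintype.sum_prod_type]
  have hL : ∀ q1 : {j : Fin b.length // bVtx b hb (j : ℕ) = Q.s a},
      (∑ q2 : Fin r, bandEntry K b hb lam a (p.1.1 : ℕ) (q1.1 : ℕ) p.2 q2
          * topMap _ r x (q1, q2))
      = if (p.2 : ℕ) = r - 1 then
          bandEntry K b hb lam a (p.1.1 : ℕ) (q1.1 : ℕ) (0 : Fin 1) (0 : Fin 1) * x (q1, 0)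
        else 0 := by
    intro q1
    rw [Finset.sum_eq_single (⟨r - 1, hlt⟩ : Fin r)]
    · erw [topMap_apply, if_pos rfl]
      by_cases h : (p.2 : ℕ) = r - 1
      · rw [if_pos h]
        have hp : p.2 = ⟨r - 1, hlt⟩ := Fin.ext h
        rw [hp, bandEntry_diag]
      · rw [if_neg h]
        have hlt2 : (p.2 : ℕ) < ((⟨r - 1, hlt⟩ : Fin r) : ℕ) := by
          have := p.2.isLt; simp only []; omega
        rw [bandEntry_of_lt b hb lam a _ _ hlt2, zero_mul]
    · intro q2 _ hne
      erw [topMap_apply, if_neg (fun hh => hne (Fin.ext hh)), mul_zero]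
    · intro hmem
      exact absurd (Finset.mem_univ _) hmem
  rw [Finset.sum_congr rfl fun q1 _ => hL q1]
  by_cases h : (p.2 : ℕ) = r - 1
  · simp only [h, if_pos rfl]
    erw [band_apply, Fintype.sum_prod_type]
    refine (Finset.sum_congr rfl fun q1 _ => ?_).symm
    rw [Fin.sum_univ_one]
    congr 1
  · simp [h]

lemma slice_intertwine (r : ℕ) (c : ℕ) (hc : c < r) (a : Q.A)
    (x : (bandRep K Q b hb lam r).M (Q.s a))
    (hx : ∀ p : {j : Fin b.length // bVtx b hb (j : ℕ) = Q.s a} × Fin r,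
      (p.2 : ℕ) < c → x p = 0) :
    sliceMap _ r c ((bandRep K Q b hb lam r).φ a x)
      = (bandRep K Q b hb lam 1).φ a (sliceMap _ r c x) := by
  funext p
  erw [sliceMap_apply hc, band_apply, band_apply, Fintype.sum_prod_type,
    Fintype.sum_prod_type]
  refine Finset.sum_congr rfl fun q1 _ => ?_
  erw [Fin.sum_univ_one, sliceMap_apply hc]
  rw [Finset.sum_eq_single (⟨c, hc⟩ : Fin r)]
  · have h0 : (p.2 : Fin 1) = 0 := Subsingleton.elim _ _
    rw [bandEntry_diag, h0]
  · intro q2 _ hne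
    rcases lt_trichotomy (q2 : ℕ) c with h | h | h
    · rw [hx (q1, q2) h, mul_zero]
    · exact absurd (Fin.ext h) hne
    · have : ((⟨c, hc⟩ : Fin r) : ℕ) < (q2 : ℕ) := h
      rw [bandEntry_of_lt b hb lam a _ _ this, zero_mul]
  · intro hmem
    exact absurd (Finset.mem_univ _) hmem

end BandAux3
section BandAux4

variable {K : Type} [Field K] {Q : FinQuiver} (b : List (Letter Q)) (hb : b ≠ []) (lam : K)

/-- The submodule of vectors supported on slices `≥ c`. -/
noncomputable def Fsub (α : Type) (m c : ℕ) : Submodule K ((α × Fin m) → K) where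
  carrier := {x | ∀ p : α × Fin m, (p.2 : ℕ) < c → x p = 0}
  add_mem' := fun {x y} hx hy p hp => by
    rw [Pi.add_apply, hx p hp, hy p hp, add_zero]
  zero_mem' := fun p _ => rfl
  smul_mem' := fun t x hx p hp => by rw [Pi.smul_apply, hx p hp, smul_zero]

lemma mem_Fsub {α : Type} {m c : ℕ} {x : (α × Fin m) → K} :
    x ∈ Fsub (K := K) α m c ↔ ∀ p : α × Fin m, (p.2 : ℕ) < c → x p = 0 := Iff.rfl

lemma Fsub_zero (α : Type) (m : ℕ) : Fsub (K := K) α m 0 = ⊤ := by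
  ext x; simp [mem_Fsub]

lemma Fsub_top (α : Type) (m : ℕ) : Fsub (K := K) α m m = ⊥ := by
  ext x
  simp only [mem_Fsub, Submodule.mem_bot]
  constructor
  · intro h; funext p; exact h p p.2.isLt
  · intro h p _; rw [h]; rfl

lemma Fsub_mono (α : Type) (m : ℕ) {c c' : ℕ} (h : c ≤ c') :
    Fsub (K := K) α m c' ≤ Fsub (K := K) α m c :=
  fun _ hx p hp => hx p (lt_of_lt_of_le hp h)

lemma Fsub_compat (r : ℕ) (c : ℕ) (a : Q.A)
    (x : (bandRep K Q b hb lam r).M (Q.s a))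
    (hx : x ∈ Fsub (K := K) _ r c) :
    (bandRep K Q b hb lam r).φ a x ∈ Fsub (K := K) _ r c := by
  intro p hp
  rw [band_apply]
  refine Finset.sum_eq_zero fun q _ => ?_
  rcases lt_or_ge (q.2 : ℕ) c with h | h
  · rw [hx q h, mul_zero]
  · have : (p.2 : ℕ) < (q.2 : ℕ) := lt_of_lt_of_le hp h
    rw [bandEntry_of_lt b hb lam a _ _ this, zero_mul]

/-- Rank–nullity bookkeeping for one filtration step. -/
lemma rank_step {M N : Type} [AddCommGroup M] [Module K M] [AddCommGroup N] [Module K N]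
    [FiniteDimensional K M]
    (f : M →ₗ[K] N) (P P' : Submodule K M) (hle : P' ≤ P)
    (hker : ∀ x ∈ P, (f x = 0 ↔ x ∈ P')) :
    Module.finrank K P = Module.finrank K (P.map f) + Module.finrank K P' := by
  have h1 := (f.comp P.subtype).finrank_range_add_finrank_ker
  have hr : LinearMap.range (f.comp P.subtype) = P.map f := by
    rw [LinearMap.range_comp, Submodule.range_subtype]
  have hk : LinearMap.ker (f.comp P.subtype) = Submodule.comap P.subtype P' := by
    ext ⟨x, hx⟩
    simp only [LinearMap.mem_ker, LinearMap.comp_apply, Submodule.subtype_apply,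
      Submodule.mem_comap]
    exact hker x hx
  rw [hr, hk] at h1
  rw [(Submodule.comapSubtypeEquivOfLe hle).finrank_eq] at h1
  omega

lemma telescope (g d : ℕ → ℕ) (r : ℕ) (h : ∀ c < r, g c = d c + g (c + 1)) (h0 : g r = 0) :
    g 0 = ∑ c ∈ Finset.range r, d c := by
  have aux : ∀ k, k ≤ r → g (r - k) = ∑ c ∈ Finset.Ico (r - k) r, d c := by
    intro k
    induction k with
    | zero => intro _; simp [h0]
    | succ k ih =>
      intro hk
      have hlt : r - (k + 1) < r := by omega
      have e1 : r - (k + 1) + 1 = r - k := by omega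
      rw [h _ hlt, e1, ih (by omega), Finset.sum_eq_sum_Ico_succ_bot hlt, e1]
  have := aux r le_rfl
  simpa using this

end BandAux4

noncomputable instance bandModBridge {K : Type} [Field K] {Q : FinQuiver} (b : List (Letter Q))
    (hb : b ≠ []) (lam : K) (m : ℕ) (i : Q.V) :
    @Module K (({j : Fin b.length // bVtx b hb j = i} × Fin m) → K) _
      (@AddCommGroup.toAddCommMonoid ((bandRep K Q b hb lam m).M i) ((bandRep K Q b hb lam m).acg i)) :=
  (bandRep K Q b hb lam m).mod i

/-- For a band `b` over a bound quiver algebra and `λ ∈ K^×`, the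
stability space of the band module `M(b, λ, r)` equals that of `M(b, λ, 1)` for every
`r ≥ 1`. -/
theorem stability_space_of_band_module_independent_of_rank
    (K : Type) [Field K] [IsAlgClosed K] (Q : FinQuiver) (D : BoundQuiver Q)
    (b : List (Letter Q)) (hb : IsBand D b) (lam : K) (hlam : lam ≠ 0)
    (r : ℕ) (hr : 1 ≤ r) :
    stabSpace (bandRep K Q b hb.1 lam r) = stabSpace (bandRep K Q b hb.1 lam 1) := by
  set hb1 := hb.1 with hhb1
  have hSI : ∀ v : Q.V → ℝ, stabInner v ((bandRep K Q b hb1 lam r).dimVec)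
      = r * stabInner v ((bandRep K Q b hb1 lam 1).dimVec) := by
    intro v
    simp only [stabInner]
    rw [Finset.mul_sum]
    refine Finset.sum_congr rfl fun i _ => ?_
    have h1 : (bandRep K Q b hb1 lam r).dimVec i
        = Fintype.card {j : Fin b.length // bVtx b hb1 (j : ℕ) = i} * r := by
      simp [QRep.dimVec, bandRep, Module.finrank_pi, Fintype.card_prod, Fintype.card_fin]
      exact (Module.finrank_fintype_fun_eq_card K).trans (by simp)
    have h2 : (bandRep K Q b hb1 lam 1).dimVec i
        = Fintype.card {j : Fin b.length // bVtx b hb1 (j : ℕ) = i} := by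
      simp [QRep.dimVec, bandRep, Module.finrank_pi, Fintype.card_prod, Fintype.card_fin]
      exact (Module.finrank_fintype_fun_eq_card K).trans (by simp)
    rw [h1, h2]
    push_cast
    ring
  ext v
  simp only [stabSpace, Set.mem_setOf_eq, IsSemistable]
  constructor
  · rintro ⟨hd, hsub⟩
    constructor
    · rw [hSI v] at hd
      have hr0 : (r : ℝ) ≠ 0 := Nat.cast_ne_zero.mpr (by omega)
      exact (mul_eq_zero.mp hd).resolve_left hr0
    · intro N
      have hcompat : ∀ a : Q.A, ∀ x ∈ (N.L (Q.s a)).map (topMap (K := K) _ r),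
          (bandRep K Q b hb1 lam r).φ a x ∈ (N.L (Q.t a)).map (topMap (K := K) _ r) := by
        intro a x hx
        rcases Submodule.mem_map.mp hx with ⟨y, hy, rfl⟩
        exact ⟨(bandRep K Q b hb1 lam 1).φ a y, N.compat a y hy,
          (top_intertwine b hb1 lam r hr a y).symm⟩
      have h2 : stabInner v
          (fun i => Module.finrank K ((N.L i).map (topMap (K := K) _ r))) ≤ 0 :=
        hsub ⟨fun i => (N.L i).map (topMap (K := K) _ r), hcompat⟩
      have hfr : ∀ i, Module.finrank K ((N.L i).map (topMap (K := K) _ r))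
          = Module.finrank K (N.L i) := fun i => by
        let P : Submodule K (({j : Fin b.length // bVtx b hb1 (j : ℕ) = i} × Fin 1) → K) := N.L i
        exact ((Submodule.equivMapOfInjective _ (topMap_injective r hr) P).finrank_eq).symm
      calc stabInner v (fun i => Module.finrank K (N.L i))
          = stabInner v
            (fun i => Module.finrank K ((N.L i).map (topMap (K := K) _ r))) := by
            simp only [stabInner, hfr]
        _ ≤ 0 := h2
  · rintro ⟨hd, hsub⟩
    refine ⟨by rw [hSI v, hd, mul_zero], ?_⟩
    intro L
    have hNsub : ∀ c, c < r → stabInner v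
        (fun i => Module.finrank K
          ((L.L i ⊓ Fsub (K := K) _ r c).map (sliceMap (K := K) _ r c))) ≤ 0 := by
      intro c hc
      refine hsub ⟨fun i => (L.L i ⊓ Fsub (K := K) _ r c).map (sliceMap (K := K) _ r c), ?_⟩
      intro a x hx
      rcases Submodule.mem_map.mp hx with ⟨y, hy, rfl⟩
      obtain ⟨hy1, hy2⟩ := Submodule.mem_inf.mp hy
      exact Submodule.mem_map.mpr ⟨(bandRep K Q b hb1 lam r).φ a y,
        Submodule.mem_inf.mpr ⟨L.compat a y hy1, Fsub_compat b hb1 lam r c a y hy2⟩,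
        slice_intertwine b hb1 lam r c hc a y hy2⟩
    have hrank : ∀ i, Module.finrank K (L.L i)
        = ∑ c ∈ Finset.range r, Module.finrank K
            ((L.L i ⊓ Fsub (K := K) _ r c).map (sliceMap (K := K) _ r c)) := by
      intro i
      have hstep : ∀ c, c < r →
          Module.finrank K ↥(L.L i ⊓ Fsub (K := K) _ r c)
            = Module.finrank K
                ((L.L i ⊓ Fsub (K := K) _ r c).map (sliceMap (K := K) _ r c))
              + Module.finrank K ↥(L.L i ⊓ Fsub (K := K) _ r (c + 1)) := by
        intro c hc
        refine rank_step (sliceMap (K := K) _ r c)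
          (L.L i ⊓ Fsub (K := K) _ r c) (L.L i ⊓ Fsub (K := K) _ r (c + 1))
          (inf_le_inf_left (L.L i) (Fsub_mono _ r (Nat.le_succ c))) ?_
        intro x hx
        obtain ⟨hx1, hx2⟩ := Submodule.mem_inf.mp hx
        constructor
        · intro h0
          refine Submodule.mem_inf.mpr ⟨hx1, ?_⟩
          intro p hp
          rcases lt_or_eq_of_le (Nat.lt_succ_iff.mp hp) with h | h
          · exact hx2 p h
          · have hpe : p.2 = (⟨c, hc⟩ : Fin r) := Fin.ext h
            have h1 := congrFun h0 (p.1, 0)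
            rw [sliceMap_apply hc] at h1
            rw [show p = (p.1, p.2) from rfl, hpe]
            exact h1
        · intro hmem
          funext p
          rw [sliceMap_apply hc]
          exact (Submodule.mem_inf.mp hmem).2 (p.1, ⟨c, hc⟩) (Nat.lt_succ_self c)
      have hend : Module.finrank K ↥(L.L i ⊓ Fsub (K := K) _ r r) = 0 := by
        have hPr : L.L i ⊓ Fsub (K := K) _ r r = ⊥ := by
          rw [Fsub_top]; exact inf_bot_eq _
        rw [hPr]
        exact finrank_bot K _
      have htel := telescope
        (fun c => Module.finrank K ↥(L.L i ⊓ Fsub (K := K) _ r c))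
        (fun c => Module.finrank K
          ((L.L i ⊓ Fsub (K := K) _ r c).map (sliceMap (K := K) _ r c)))
        r hstep hend
      have hP0 : L.L i ⊓ Fsub (K := K) _ r 0 = L.L i := by
        rw [Fsub_zero]; exact inf_top_eq _
      conv_lhs => rw [← hP0]
      exact htel
    have hfinal : stabInner v (fun i => Module.finrank K (L.L i))
        = ∑ c ∈ Finset.range r, stabInner v
            (fun i => Module.finrank K
              ((L.L i ⊓ Fsub (K := K) _ r c).map (sliceMap (K := K) _ r c))) := by
      simp only [stabInner]
      have h1 : ∀ i : Q.V, v i * ((Module.finrank K (L.L i) : ℕ) : ℝ)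
          = ∑ c ∈ Finset.range r, v i * ((Module.finrank K
              ((L.L i ⊓ Fsub (K := K) _ r c).map (sliceMap (K := K) _ r c)) : ℕ) : ℝ) := by
        intro i
        rw [hrank i]
        push_cast
        rw [Finset.mul_sum]
      rw [Finset.sum_congr rfl fun i _ => h1 i]
      exact Finset.sum_comm
    rw [hfinal]
    exact Finset.sum_nonpos fun c hc => hNsub c (Finset.mem_range.mp hc)
end

section
/- Let A = KQ/I be a special biserial algebra over an algebraically closed field K, b a band for A, λ ∈ K^×, r ≥ 1, and N = M(b,λ,r). If v is a string obtained from the cyclic word b by deleting one letter, then D(M(v)) ⊆ D(N). -/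
attribute [local instance] Classical.propDecidable

namespace DSB


variable {K : Type} [Field K]

/-- `s` is a maximal-height support coordinate of some nonzero element of `L`. -/
def Lead {X : Type} (L : Submodule K (X → K)) (h : X → ℕ) (s : X) : Prop :=
  ∃ x ∈ L, x s ≠ 0 ∧ ∀ t, x t ≠ 0 → h t ≤ h s

lemma exists_lead {X : Type} [Fintype X] {x : X → K} {s₁ : X} (hs : x s₁ ≠ 0) (h : X → ℕ) :
    ∃ s, x s ≠ 0 ∧ ∀ t, x t ≠ 0 → h t ≤ h s := by
  classical
  obtain ⟨s, hsmem, hmax⟩ := Finset.exists_max_image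
    (Finset.univ.filter fun t => x t ≠ 0) h ⟨s₁, by simp [hs]⟩
  refine ⟨s, by simpa using hsmem, fun t ht => hmax t (by simp [ht])⟩

lemma lead_step {X Y : Type} [Fintype X] [Fintype Y]
    (L : Submodule K (X → K)) (L' : Submodule K (Y → K))
    (A : Matrix Y X K) (hmap : ∀ f ∈ L, A.mulVecLin f ∈ L')
    (hX : X → ℕ) (hY : Y → ℕ) {s₀ : X} {t₀ : Y}
    (hlead : Lead L hX s₀)
    (h1 : A t₀ s₀ ≠ 0)
    (h2 : ∀ s t, A t s ≠ 0 → hX s ≤ hX s₀ → hY t ≤ hY t₀)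
    (h3 : ∀ s, A t₀ s ≠ 0 → s ≠ s₀ → hX s₀ < hX s) :
    Lead L' hY t₀ := by
  classical
  obtain ⟨x, hxL, hx0, hxmax⟩ := hlead
  have hval : ∀ t, A.mulVecLin x t = ∑ s, A t s * x s := by
    intro t
    simp [Matrix.mulVecLin_apply, Matrix.mulVec, dotProduct]
  refine ⟨A.mulVecLin x, hmap x hxL, ?_, ?_⟩
  · rw [hval, Finset.sum_eq_single s₀]
    · exact mul_ne_zero h1 hx0
    · intro s _ hne
      by_cases hA : A t₀ s = 0
      · simp [hA]
      · have hx : x s = 0 := by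
          by_contra hxs
          exact absurd (hxmax s hxs) (not_le.mpr (h3 s hA hne))
        simp [hx]
    · intro hs
      exact absurd (Finset.mem_univ s₀) hs
  · intro t ht
    rw [hval] at ht
    obtain ⟨s, _, hterm⟩ := Finset.exists_ne_zero_of_sum_ne_zero ht
    have hA : A t s ≠ 0 := fun h => hterm (by simp [h])
    have hx : x s ≠ 0 := fun h => hterm (by simp [h])
    exact h2 s t hA (hxmax s hx)

/-- The coordinate submodule supported on `P`. -/
def coordSub (X : Type) (P : X → Prop) : Submodule K (X → K) where
  carrier := {f | ∀ s, ¬ P s → f s = 0}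
  add_mem' := fun hf hg s hs => by simp [Set.mem_setOf_eq] at hf hg ⊢; simp [hf s hs, hg s hs]
  zero_mem' := fun s _ => rfl
  smul_mem' := fun c f hf s hs => by
    simp only [Set.mem_setOf_eq] at hf
    simp [Pi.smul_apply, hf s hs]

lemma mem_coordSub {X : Type} {P : X → Prop} {f : X → K} :
    f ∈ coordSub (K := K) X P ↔ ∀ s, ¬ P s → f s = 0 := Iff.rfl

lemma finrank_coordSub {X : Type} [Fintype X] (P : X → Prop) :
    Module.finrank K (coordSub (K := K) X P) = Fintype.card {s : X // P s} := by
  classical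
  have e : (coordSub (K := K) X P) ≃ₗ[K] ({s : X // P s} → K) :=
    { toFun := fun f s => f.1 s.1
      map_add' := fun f g => rfl
      map_smul' := fun c f => rfl
      invFun := fun g => ⟨fun s => if h : P s then g ⟨s, h⟩ else 0, fun s hs => dif_neg hs⟩
      left_inv := fun f => Subtype.ext (funext fun s => by
        by_cases h : P s
        · simp [h]
        · simp [h, f.2 s h])
      right_inv := fun g => funext fun s => by
        show (if h : P s.1 then g ⟨s.1, h⟩ else 0) = g s
        rw [dif_pos s.2] }
  rw [e.finrank_eq, Module.finrank_fintype_fun_eq_card]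


lemma finrank_eq_card_lead {X : Type} [Fintype X] (L : Submodule K (X → K))
    (h : X → ℕ) (hinj : Function.Injective h) :
    Module.finrank K L = Fintype.card {s : X // Lead L h s} := by
  classical
  have hch : ∀ s : {s : X // Lead L h s}, ∃ x, x ∈ L ∧ x s.1 ≠ 0 ∧
      ∀ t, x t ≠ 0 → h t ≤ h s.1 := fun s => s.2
  choose c hcL hc0 hcmax using hch
  -- linear independence of the chosen witnesses
  have hind : LinearIndependent K c := by
    rw [Fintype.linearIndependent_iff]
    intro g hg
    by_contra hne
    push_neg at hne
    obtain ⟨i₀, hi₀⟩ := hne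
    obtain ⟨i, himem, hmax⟩ := Finset.exists_max_image
      (Finset.univ.filter fun i => g i ≠ 0) (fun i => h i.1) ⟨i₀, by simp [hi₀]⟩
    have hgi : g i ≠ 0 := by simpa using himem
    have hzero := congrFun hg i.1
    rw [Finset.sum_apply] at hzero
    rw [Finset.sum_eq_single i] at hzero
    · exact (mul_ne_zero hgi (hc0 i)) (by simpa using hzero)
    · intro j _ hji
      by_cases hgj : g j = 0
      · simp [hgj]
      · by_cases hcj : c j i.1 = 0
        · simp [hcj]
        · exfalso
          have h1 : h i.1 ≤ h j.1 := hcmax j i.1 hcj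
          have h2 : h j.1 ≤ h i.1 := hmax j (by simp [hgj])
          exact hji (Subtype.ext (hinj (le_antisymm h2 h1)))
    · intro hi
      exact absurd (Finset.mem_univ i) hi
  have hcard_le : Fintype.card {s : X // Lead L h s} ≤ Module.finrank K L := by
    have hc' : LinearIndependent K (fun s : {s : X // Lead L h s} => (⟨c s, hcL s⟩ : L)) := by
      apply LinearIndependent.of_comp L.subtype
      simpa [Function.comp_def] using hind
    exact hc'.fintype_card_le_finrank
  -- spanning
  have hspan : ∀ m, ∀ x ∈ L, (∀ t, x t ≠ 0 → h t < m) →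
      x ∈ Submodule.span K (Set.range c) := by
    intro m
    induction m with
    | zero =>
      intro x _ hbd
      have : x = 0 := funext fun t => by
        by_contra hxt
        exact Nat.not_lt_zero _ (hbd t hxt)
      simp [this]
    | succ m ih =>
      intro x hx hbd
      by_cases hx0 : x = 0
      · simp [hx0]
      · obtain ⟨t₁, ht₁⟩ : ∃ t, x t ≠ 0 := by
          by_contra hall
          push_neg at hall
          exact hx0 (funext fun t => hall t)
        obtain ⟨s, hs0, hsmax⟩ := exists_lead ht₁ h
        have hsl : Lead L h s := ⟨x, hx, hs0, hsmax⟩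
        set S : {s : X // Lead L h s} := ⟨s, hsl⟩
        set y := x - (x s / c S s) • c S with hy
        have hyL : y ∈ L := L.sub_mem hx (L.smul_mem _ (hcL S))
        have hys : y s = 0 := by
          simp only [hy, Pi.sub_apply, Pi.smul_apply, smul_eq_mul]
          rw [div_mul_cancel₀ _ (hc0 S)]
          ring
        have hybd : ∀ t, y t ≠ 0 → h t < m := by
          intro t hyt
          have hts : t ≠ s := fun he => hyt (he ▸ hys)
          have hle : h t ≤ h s := by
            by_cases hxt : x t = 0
            · by_cases hct : c S t = 0
              · exfalso; apply hyt; simp [hy, hxt, hct]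
              · exact hcmax S t hct
            · exact hsmax t hxt
          have hlt : h t < h s := lt_of_le_of_ne hle (fun he => hts (hinj he))
          have hsm : h s < m + 1 := hbd s hs0
          omega
        have hyspan := ih y hyL hybd
        have : x = y + (x s / c S s) • c S := by simp [hy]
        rw [this]
        exact Submodule.add_mem _ hyspan
          (Submodule.smul_mem _ _ (Submodule.subset_span (Set.mem_range_self S)))
  have hle2 : Module.finrank K L ≤ Fintype.card {s : X // Lead L h s} := by
    have hLle : L ≤ Submodule.span K (Set.range c) := by
      intro x hx
      exact hspan ((Finset.univ.sup h) + 1) x hx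
        (fun t _ => Nat.lt_succ_of_le (Finset.le_sup (Finset.mem_univ t)))
    calc Module.finrank K L ≤ Module.finrank K (Submodule.span K (Set.range c)) :=
          Submodule.finrank_mono hLle
      _ ≤ (Set.range c).toFinset.card := finrank_span_le_card _
      _ ≤ Fintype.card {s : X // Lead L h s} := by
          rw [Set.toFinset_range]
          exact (Finset.card_image_le).trans (by simp)
  omega


/-! ### Arithmetic helpers -/

lemma mul_height_le {r x y a c : ℕ} (ha : a < r) (h : r * x + a ≤ r * y + c) (hc : c < r) :
    x ≤ y := by
  by_contra hxy
  push_neg at hxy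
  have h2 : r * (y + 1) ≤ r * x := Nat.mul_le_mul_left r hxy
  rw [Nat.mul_succ] at h2
  omega

lemma mul_height_lt {r x y a c : ℕ} (ha : a < r) (h : x < y) :
    r * x + a < r * y + c := by
  have h2 : r * (x + 1) ≤ r * y := Nat.mul_le_mul_left r h
  rw [Nat.mul_succ] at h2
  omega

/-- The cut height function on positions. -/
def hposN (n p : ℕ) (dir : Bool) (j : ℕ) : ℕ :=
  if dir then (j + (n - 1 - p)) % n else n - 1 - ((j + (n - 1 - p)) % n)

lemma psi_lt {n p : ℕ} (hn : 0 < n) (j : ℕ) : (j + (n - 1 - p)) % n < n :=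
  Nat.mod_lt _ hn

lemma hposN_le {n p : ℕ} (hn : 0 < n) (dir : Bool) (j : ℕ) : hposN n p dir j ≤ n - 1 := by
  have := psi_lt (p := p) hn j
  unfold hposN
  cases dir <;> simp <;> omega

lemma psi_inj {n p : ℕ} {j k : ℕ} (hj : j < n) (hk : k < n)
    (h : (j + (n - 1 - p)) % n = (k + (n - 1 - p)) % n) : j = k := by
  have h1 : (j : ℕ) ≡ k [MOD n] := (Nat.ModEq.add_right_cancel' (n - 1 - p) h)
  have := h1.eq_of_lt_of_lt hj hk
  exact this

lemma hposN_inj {n p : ℕ} {j k : ℕ} (hn : 0 < n) (hj : j < n) (hk : k < n) (dir : Bool)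
    (h : hposN n p dir j = hposN n p dir k) : j = k := by
  unfold hposN at h
  have h1 := psi_lt (p := p) hn j
  have h2 := psi_lt (p := p) hn k
  cases dir
  · simp only [Bool.false_eq_true, if_false] at h
    exact psi_inj (p := p) hj hk (by omega)
  · simp only [if_true] at h
    exact psi_inj hj hk h

lemma psi_p {n p : ℕ} (hp : p < n) : (p + (n - 1 - p)) % n = n - 1 := by
  have : p + (n - 1 - p) = n - 1 := by omega
  rw [this, Nat.mod_eq_of_lt (by omega)]

lemma psi_psucc {n p : ℕ} (hp : p < n) : ((p + 1) % n + (n - 1 - p)) % n = 0 := by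
  rcases Nat.lt_or_ge (p + 1) n with h | h
  · rw [Nat.mod_eq_of_lt h]
    have : p + 1 + (n - 1 - p) = n := by omega
    rw [this, Nat.mod_self]
  · have hpn : p + 1 = n := by omega
    have : (p + 1) % n = 0 := by rw [hpn, Nat.mod_self]
    rw [this]
    have : n - 1 - p = 0 := by omega
    rw [this]
    simp

/-- The step relation on heights along a non-deleted edge. -/
lemma psi_step {n p e : ℕ} (he : e < n) (hep : e ≠ p) (hp : p < n) :
    ((e + 1) % n + (n - 1 - p)) % n = (e + (n - 1 - p)) % n + 1 ∧
      (e + (n - 1 - p)) % n < n - 1 := by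
  have hlt : (e + (n - 1 - p)) % n < n := psi_lt (by omega) e
  have hne : (e + (n - 1 - p)) % n ≠ n - 1 := by
    intro h
    exact hep (psi_inj he hp (h.trans (psi_p hp).symm))
  constructor
  · rcases Nat.lt_or_ge (e + 1) n with h1 | h1
    · rw [Nat.mod_eq_of_lt h1]
      have he1 : e + 1 + (n - 1 - p) = (e + (n - 1 - p)) + 1 := by omega
      rw [he1]
      have hdm := Nat.div_add_mod (e + (n - 1 - p)) n
      have hcomm : n * ((e + (n - 1 - p)) / n) = ((e + (n - 1 - p)) / n) * n :=
        Nat.mul_comm _ _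
      have hrw : e + (n - 1 - p) + 1 = ((e + (n - 1 - p)) % n + 1) + ((e + (n - 1 - p)) / n) * n := by
        omega
      have hfin : ((e + (n - 1 - p)) % n + 1) % n = (e + (n - 1 - p)) % n + 1 :=
        Nat.mod_eq_of_lt (by omega)
      rw [hrw, Nat.add_mul_mod_self_right, hfin]
    · have he2 : e = n - 1 := by omega
      have hn2 : (e + 1) % n = 0 := by
        have : e + 1 = n := by omega
        rw [this, Nat.mod_self]
      rw [hn2]
      have hpe : p ≤ n - 2 := by
        rcases Nat.lt_or_ge p (n-1) with h | h
        · omega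
        · exfalso; exact hep (by omega)
      have hL : (0 + (n - 1 - p)) % n = n - 1 - p := by
        rw [Nat.zero_add, Nat.mod_eq_of_lt (by omega)]
      have hR : (e + (n - 1 - p)) % n = n - 2 - p := by
        have : e + (n - 1 - p) = (n - 2 - p) + n := by omega
        rw [this, Nat.add_mod_right, Nat.mod_eq_of_lt (by omega)]
      omega
  · omega


/-! ### Word lemmas -/

variable {Q : FinQuiver}

lemma wordComposable_get {l : List (Letter Q)} (h : WordComposable l) :
    ∀ k, (hk : k + 1 < l.length) → ltgt (l[k]'(by omega)) = lsrc (l[k+1]'hk) := by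
  induction l with
  | nil => intro k hk; simp at hk
  | cons c t ih =>
    intro k hk
    cases t with
    | nil => simp at hk
    | cons d t' =>
      obtain ⟨h1, h2⟩ := h
      cases k with
      | zero => simpa using h1
      | succ m =>
        have := ih h2 m (by simpa using hk)
        simpa using this

lemma wordReduced_get {l : List (Letter Q)} (h : WordReduced l) :
    ∀ k, (hk : k + 1 < l.length) → (l[k+1]'hk) ≠ linv (l[k]'(by omega)) := by
  induction l with
  | nil => intro k hk; simp at hk
  | cons c t ih =>
    intro k hk
    cases t with
    | nil => simp at hk
    | cons d t' =>
      obtain ⟨h1, h2⟩ := h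
      cases k with
      | zero => simpa using h1
      | succ m =>
        have := ih h2 m (by simpa using hk)
        simpa using this

lemma bLett_eq_get {b : List (Letter Q)} (hb1 : b ≠ []) (j : ℕ) :
    bLett b hb1 j = b[j % b.length]'(Nat.mod_lt _ (List.length_pos_iff.mpr hb1)) :=
  List.getD_eq_getElem _ _ _

lemma bVtx_eq_lsrc {b : List (Letter Q)} (hb1 : b ≠ []) (j : ℕ) :
    bVtx b hb1 j = lsrc (bLett b hb1 j) := rfl

lemma succ_mod_shift {j n : ℕ} (hn : 0 < n) : (j + 1) % n = (j % n + 1) % n := by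
  have hdm := Nat.div_add_mod j n
  have hcomm : n * (j / n) = (j / n) * n := Nat.mul_comm _ _
  have h1 : j + 1 = (j % n + 1) + (j / n) * n := by omega
  rw [h1, Nat.add_mul_mod_self_right]

lemma bLett_mod {b : List (Letter Q)} (hb1 : b ≠ []) (j : ℕ) :
    bLett b hb1 (j % b.length) = bLett b hb1 j := by
  unfold bLett
  rw [Nat.mod_mod_of_dvd _ dvd_rfl]

lemma bLett_succ_mod {b : List (Letter Q)} (hb1 : b ≠ []) (j : ℕ) :
    bLett b hb1 (j % b.length + 1) = bLett b hb1 (j + 1) := by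
  have hn : 0 < b.length := List.length_pos_iff.mpr hb1
  unfold bLett
  conv_rhs => rw [succ_mod_shift hn]

lemma bLett_eq_get' {b : List (Letter Q)} (hb1 : b ≠ []) {m : ℕ} (hm : m < b.length) :
    bLett b hb1 m = b[m] := by
  unfold bLett
  rw [Nat.mod_eq_of_lt hm]
  exact List.getD_eq_getElem _ _ hm

lemma bLett_len {b : List (Letter Q)} (hb1 : b ≠ []) :
    bLett b hb1 b.length = b[0]'(List.length_pos_iff.mpr hb1) := by
  unfold bLett
  rw [Nat.mod_self]
  exact List.getD_eq_getElem _ _ _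

lemma cyc_comp {b : List (Letter Q)} (hb1 : b ≠ [])
    (h : WordComposable (b ++ b)) (j : ℕ) :
    ltgt (bLett b hb1 j) = bVtx b hb1 (j + 1) := by
  have hn : 0 < b.length := List.length_pos_iff.mpr hb1
  have hm : j % b.length < b.length := Nat.mod_lt _ hn
  rw [bVtx_eq_lsrc, ← bLett_mod hb1 j, ← bLett_succ_mod hb1 j]
  have hget := wordComposable_get h (j % b.length)
    (by rw [List.length_append]; omega)
  rcases Nat.lt_or_ge (j % b.length + 1) b.length with hlt | hge
  · rw [List.getElem_append_left (by omega), List.getElem_append_left hlt] at hget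
    rw [bLett_eq_get' hb1 hm, bLett_eq_get' hb1 hlt]
    exact hget
  · have he : j % b.length + 1 = b.length := by omega
    rw [List.getElem_append_left (by omega)] at hget
    have hr : (b ++ b)[j % b.length + 1]'(by rw [List.length_append]; omega)
        = b[0]'hn := by
      rw [List.getElem_append_right (by omega)]
      congr 1
      omega
    rw [hr] at hget
    rw [bLett_eq_get' hb1 hm, he, bLett_len hb1]
    exact hget

lemma cyc_red {b : List (Letter Q)} (hb1 : b ≠ [])
    (h : WordReduced (b ++ b)) (j : ℕ) :
    bLett b hb1 (j + 1) ≠ linv (bLett b hb1 j) := by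
  have hn : 0 < b.length := List.length_pos_iff.mpr hb1
  have hm : j % b.length < b.length := Nat.mod_lt _ hn
  rw [← bLett_mod hb1 j, ← bLett_succ_mod hb1 j]
  have hget := wordReduced_get h (j % b.length)
    (by rw [List.length_append]; omega)
  rcases Nat.lt_or_ge (j % b.length + 1) b.length with hlt | hge
  · rw [List.getElem_append_left hlt, List.getElem_append_left hm] at hget
    rw [bLett_eq_get' hb1 hm, bLett_eq_get' hb1 hlt]
    exact hget
  · have he : j % b.length + 1 = b.length := by omega
    have hr : (b ++ b)[j % b.length + 1]'(by rw [List.length_append]; omega)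
        = b[0]'hn := by
      rw [List.getElem_append_right (by omega)]
      congr 1
      omega
    rw [hr, List.getElem_append_left hm] at hget
    rw [bLett_eq_get' hb1 hm, he, bLett_len hb1]
    exact hget

/-! ### Height step lemmas -/

lemma succ_mod_inj {n q j : ℕ} (hq : q < n) (hj : j < n)
    (h : (q + 1) % n = (j + 1) % n) : q = j := by
  have h1 : q ≡ j [MOD n] := Nat.ModEq.add_right_cancel' 1 h
  exact h1.eq_of_lt_of_lt hq hj

lemma hposN_step_t {n p e : ℕ} (he : e < n) (hep : e ≠ p) (hp : p < n) :
    hposN n p true ((e + 1) % n) = hposN n p true e + 1 := by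
  have := psi_step (p := p) he hep hp
  unfold hposN
  simp only [if_true]
  exact this.1

lemma hposN_step_f {n p e : ℕ} (he : e < n) (hep : e ≠ p) (hp : p < n) :
    hposN n p false e = hposN n p false ((e + 1) % n) + 1 := by
  obtain ⟨h1, h2⟩ := psi_step (p := p) he hep hp
  unfold hposN
  simp only [Bool.false_eq_true, if_false]
  omega

lemma hposN_p_t {n p : ℕ} (hp : p < n) : hposN n p true p = n - 1 := by
  unfold hposN
  simp only [if_true]
  exact psi_p hp

lemma hposN_psucc_f {n p : ℕ} (hp : p < n) : hposN n p false ((p + 1) % n) = n - 1 := by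
  unfold hposN
  simp only [Bool.false_eq_true, if_false]
  rw [psi_psucc hp]
  omega

/-! ### Band entry lemmas -/

lemma jordEntry_ne {K : Type} [Field K] {lam : K} {m : ℕ} {κ μ : Fin m}
    (h : jordEntry lam κ μ ≠ 0) : κ = μ ∨ (μ : ℕ) + 1 = (κ : ℕ) := by
  unfold jordEntry at h
  by_cases h1 : κ = μ
  · exact Or.inl h1
  · rw [if_neg h1] at h
    by_cases h2 : (μ : ℕ) + 1 = (κ : ℕ)
    · exact Or.inr h2
    · rw [if_neg h2] at h
      exact absurd rfl h

lemma jordEntry_diag {K : Type} [Field K] (lam : K) {m : ℕ} (μ : Fin m) :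
    jordEntry lam μ μ = lam := if_pos rfl

lemma bandEntry_support {K : Type} [Field K] {Q : FinQuiver} {b : List (Letter Q)}
    (hb1 : b ≠ []) {lam : K} {r : ℕ} {a : Q.A} {k q : ℕ} (hk : k < b.length)
    (hq : q < b.length) {κ ν : Fin r}
    (h : bandEntry K b hb1 lam a k q κ ν ≠ 0) :
    (bLett b hb1 q = Sum.inl a ∧ k = (q + 1) % b.length ∧
      (κ = ν ∨ (q = b.length - 1 ∧ (ν : ℕ) + 1 = (κ : ℕ)))) ∨
    (bLett b hb1 k = Sum.inr a ∧ q = (k + 1) % b.length ∧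
      (κ = ν ∨ (k = b.length - 1 ∧ (ν : ℕ) + 1 = (κ : ℕ)))) := by
  classical
  unfold bandEntry at h
  have hk' : k % b.length = k := Nat.mod_eq_of_lt hk
  have hq' : q % b.length = q := Nat.mod_eq_of_lt hq
  rw [hk', hq'] at h
  set t1 := (if bLett b hb1 q = Sum.inl a ∧ (q + 1) % b.length = k then
      (if q + 1 = b.length then jordEntry lam κ ν else if κ = ν then (1:K) else 0)
    else 0) with ht1
  set t2 := (if bLett b hb1 k = Sum.inr a ∧ (k + 1) % b.length = q then
      (if k + 1 = b.length then jordEntry lam κ ν else if κ = ν then (1:K) else 0)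
    else 0) with ht2
  have h12 : t1 ≠ 0 ∨ t2 ≠ 0 := by
    by_contra hc
    push_neg at hc
    rw [hc.1, hc.2] at h
    simp at h
  rcases h12 with h1 | h2
  · left
    rw [ht1] at h1
    by_cases hC : bLett b hb1 q = Sum.inl a ∧ (q + 1) % b.length = k
    · refine ⟨hC.1, hC.2.symm, ?_⟩
      rw [if_pos hC] at h1
      by_cases hD : q + 1 = b.length
      · rw [if_pos hD] at h1
        rcases jordEntry_ne h1 with hd | hd
        · exact Or.inl hd
        · exact Or.inr ⟨by omega, hd⟩
      · rw [if_neg hD] at h1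
        by_cases hE : κ = ν
        · exact Or.inl hE
        · rw [if_neg hE] at h1
          exact absurd rfl h1
    · rw [if_neg hC] at h1
      exact absurd rfl h1
  · right
    rw [ht2] at h2
    by_cases hC : bLett b hb1 k = Sum.inr a ∧ (k + 1) % b.length = q
    · refine ⟨hC.1, hC.2.symm, ?_⟩
      rw [if_pos hC] at h2
      by_cases hD : k + 1 = b.length
      · rw [if_pos hD] at h2
        rcases jordEntry_ne h2 with hd | hd
        · exact Or.inl hd
        · exact Or.inr ⟨by omega, hd⟩
      · rw [if_neg hD] at h2
        by_cases hE : κ = ν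
        · exact Or.inl hE
        · rw [if_neg hE] at h2
          exact absurd rfl h2
    · rw [if_neg hC] at h2
      exact absurd rfl h2

lemma bandEntry_fwd_val {K : Type} [Field K] {Q : FinQuiver} {b : List (Letter Q)}
    (hb1 : b ≠ []) (lam : K) (r : ℕ) {a : Q.A} {q : ℕ} (hq : q < b.length)
    (hfwd : bLett b hb1 q = Sum.inl a)
    (hred : ∀ j, bLett b hb1 (j + 1) ≠ linv (bLett b hb1 j)) (μ : Fin r) :
    bandEntry K b hb1 lam a ((q + 1) % b.length) q μ μ
      = if q + 1 = b.length then lam else 1 := by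
  classical
  have hn : 0 < b.length := List.length_pos_iff.mpr hb1
  unfold bandEntry
  have hq' : q % b.length = q := Nat.mod_eq_of_lt hq
  have hk' : ((q + 1) % b.length) % b.length = (q + 1) % b.length :=
    Nat.mod_eq_of_lt (Nat.mod_lt _ hn)
  rw [hq', hk']
  have hC1 : bLett b hb1 q = Sum.inl a ∧ (q + 1) % b.length = (q + 1) % b.length :=
    ⟨hfwd, rfl⟩
  rw [if_pos hC1]
  have hC2 : ¬(bLett b hb1 ((q + 1) % b.length) = Sum.inr a ∧
      ((q + 1) % b.length + 1) % b.length = q) := by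
    rintro ⟨hc, -⟩
    rw [bLett_mod hb1 (q+1)] at hc
    apply hred q
    rw [hc, hfwd]
    rfl
  rw [if_neg hC2, add_zero]
  by_cases hD : q + 1 = b.length
  · rw [if_pos hD, if_pos hD, jordEntry_diag]
  · rw [if_neg hD, if_neg hD, if_pos rfl]

lemma bandEntry_bwd_val {K : Type} [Field K] {Q : FinQuiver} {b : List (Letter Q)}
    (hb1 : b ≠ []) (lam : K) (r : ℕ) {a : Q.A} {k : ℕ} (hk : k < b.length)
    (hbwd : bLett b hb1 k = Sum.inr a)
    (hred : ∀ j, bLett b hb1 (j + 1) ≠ linv (bLett b hb1 j)) (μ : Fin r) :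
    bandEntry K b hb1 lam a k ((k + 1) % b.length) μ μ
      = if k + 1 = b.length then lam else 1 := by
  classical
  have hn : 0 < b.length := List.length_pos_iff.mpr hb1
  unfold bandEntry
  have hk' : k % b.length = k := Nat.mod_eq_of_lt hk
  have hq' : ((k + 1) % b.length) % b.length = (k + 1) % b.length :=
    Nat.mod_eq_of_lt (Nat.mod_lt _ hn)
  rw [hk', hq']
  have hC1 : ¬(bLett b hb1 ((k + 1) % b.length) = Sum.inl a ∧
      ((k + 1) % b.length + 1) % b.length = k) := by
    rintro ⟨hc, -⟩
    rw [bLett_mod hb1 (k+1)] at hc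
    apply hred k
    rw [hc, hbwd]
    rfl
  rw [if_neg hC1, zero_add]
  have hC2 : bLett b hb1 k = Sum.inr a ∧ (k + 1) % b.length = (k + 1) % b.length :=
    ⟨hbwd, rfl⟩
  rw [if_pos hC2]
  by_cases hD : k + 1 = b.length
  · rw [if_pos hD, if_pos hD, jordEntry_diag]
  · rw [if_neg hD, if_neg hD, if_pos rfl]

/-! ### Pivots of a band subrepresentation -/

variable {K : Type} [Field K]

def HH {Q : FinQuiver} (b : List (Letter Q)) (hb1 : b ≠ []) (p : ℕ)
    (dir : Bool) (r : ℕ) (i : Q.V) :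
    ({j : Fin b.length // bVtx b hb1 (j : ℕ) = i} × Fin r) → ℕ :=
  fun s => r * hposN b.length p dir (s.1.1 : ℕ) + (r - 1 - (s.2 : ℕ))

lemma HH_inj {Q : FinQuiver} (b : List (Letter Q)) (hb1 : b ≠ []) (p : ℕ)
    (dir : Bool) (r : ℕ) (hr : 1 ≤ r) (i : Q.V) :
    Function.Injective (HH b hb1 p dir r i) := by
  rintro ⟨⟨j, hj⟩, μ⟩ ⟨⟨k, hk⟩, κ⟩ h
  unfold HH at h
  simp only at h
  have hn : 0 < b.length := j.pos
  have hμ : (μ : ℕ) < r := μ.isLt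
  have hκ : (κ : ℕ) < r := κ.isLt
  have hle1 : hposN b.length p dir (j : ℕ) ≤ hposN b.length p dir (k : ℕ) :=
    mul_height_le (by omega) (le_of_eq h) (by omega)
  have hle2 : hposN b.length p dir (k : ℕ) ≤ hposN b.length p dir (j : ℕ) :=
    mul_height_le (by omega) (le_of_eq h.symm) (by omega)
  have hpe : hposN b.length p dir (j : ℕ) = hposN b.length p dir (k : ℕ) :=
    le_antisymm hle1 hle2
  have hjk : (j : ℕ) = (k : ℕ) := hposN_inj hn j.isLt k.isLt dir hpe
  have hμκ : (μ : ℕ) = (κ : ℕ) := by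
    rw [hpe] at h
    set M := r * hposN b.length p dir (k : ℕ)
    omega
  refine Prod.ext ?_ ?_
  · exact Subtype.ext (Fin.ext hjk)
  · exact Fin.ext hμκ

def Piv {Q : FinQuiver} {b : List (Letter Q)} {hb1 : b ≠ []} {lam : K} {r : ℕ}
    (N : QSubRep (bandRep K Q b hb1 lam r)) (p : ℕ) (dir : Bool)
    (j : Fin b.length) (μ : Fin r) : Prop :=
  ∃ (i : Q.V) (h : bVtx b hb1 (j : ℕ) = i),
    Lead (N.L i) (HH b hb1 p dir r i) ⟨⟨j, h⟩, μ⟩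

lemma bVtx_mod {Q : FinQuiver} {b : List (Letter Q)} (hb1 : b ≠ []) (x : ℕ) :
    bVtx b hb1 (x % b.length) = bVtx b hb1 x := by
  unfold bVtx
  rw [Nat.mod_mod_of_dvd _ dvd_rfl]

lemma piv_step_fwd {Q : FinQuiver} {b : List (Letter Q)} {hb1 : b ≠ []}
    {lam : K} {r : ℕ} (N : QSubRep (bandRep K Q b hb1 lam r))
    {p : ℕ} {dir : Bool}
    (hred : ∀ j, bLett b hb1 (j + 1) ≠ linv (bLett b hb1 j))
    (hcomp : ∀ j, ltgt (bLett b hb1 j) = bVtx b hb1 (j + 1))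
    (hp : p < b.length) (hdir : dir = (bLett b hb1 p).isLeft)
    (hlam : lam ≠ 0) (hr : 1 ≤ r)
    {a : Q.A} {e : Fin b.length} (hep : (e : ℕ) ≠ p)
    (hfwd : bLett b hb1 (e : ℕ) = Sum.inl a) {μ : Fin r}
    (hpiv : Piv N p dir e μ) :
    Piv N p dir ⟨((e : ℕ) + 1) % b.length, Nat.mod_lt _ e.pos⟩ μ := by
  classical
  have hn0 : 0 < b.length := e.pos
  have hj : (e : ℕ) < b.length := e.isLt
  have hsa : bVtx b hb1 (e : ℕ) = Q.s a := by rw [bVtx_eq_lsrc, hfwd]; rfl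
  have hta : bVtx b hb1 (((e : ℕ) + 1) % b.length) = Q.t a := by
    rw [bVtx_mod, ← hcomp (e : ℕ), hfwd]; rfl
  obtain ⟨i, hi, hlead⟩ := hpiv
  obtain rfl : i = Q.s a := hi.symm.trans hsa
  refine ⟨Q.t a, hta, ?_⟩
  refine lead_step (N.L (Q.s a)) (N.L (Q.t a))
    (fun pp qq => bandEntry K b hb1 lam a (pp.1.1 : ℕ) (qq.1.1 : ℕ) pp.2 qq.2)
    (fun f hf => N.compat a f hf) (HH b hb1 p dir r (Q.s a)) (HH b hb1 p dir r (Q.t a))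
    hlead ?_ ?_ ?_
  · -- nonvanishing of the leading coefficient
    show bandEntry K b hb1 lam a (((e : ℕ) + 1) % b.length) (e : ℕ) μ μ ≠ 0
    rw [bandEntry_fwd_val hb1 lam r hj hfwd hred]
    split_ifs
    · exact hlam
    · exact one_ne_zero
  · -- monotonicity
    rintro ⟨⟨⟨q, hqlt⟩, hqv⟩, ν⟩ ⟨⟨⟨k, hklt⟩, hkv⟩, κ⟩ hA hHs
    have hA' : bandEntry K b hb1 lam a k q κ ν ≠ 0 := hA
    simp only [HH] at hHs ⊢
    have hμr : (μ : ℕ) < r := μ.isLt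
    have hνr : (ν : ℕ) < r := ν.isLt
    have hκr : (κ : ℕ) < r := κ.isLt
    rcases bandEntry_support hb1 hklt hqlt hA' with ⟨hfq, hkq, hκν⟩ | ⟨hbk, hqk, hκν⟩
    · -- forward entry along edge q
      subst hkq
      by_cases hqj : q = (e : ℕ)
      · subst hqj
        set M1 := r * hposN b.length p dir (e : ℕ) with hM1
        set M2 := r * hposN b.length p dir (((e : ℕ) + 1) % b.length) with hM2
        rcases hκν with rfl | ⟨-, hjor⟩
        · omega
        · omega
      · have hq_le : hposN b.length p dir q ≤ hposN b.length p dir (e : ℕ) :=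
          mul_height_le (by omega) hHs (by omega)
        have hq_lt : hposN b.length p dir q < hposN b.length p dir (e : ℕ) :=
          lt_of_le_of_ne hq_le (fun hh => hqj (hposN_inj hn0 hqlt hj dir hh))
        have hqp : q ≠ p := by
          intro hqp'
          have hdt : dir = true := by rw [hdir, ← hqp', hfq]; rfl
          rw [hqp', hdt] at hq_lt
          have hx := hposN_p_t hp
          have hy := hposN_le (p := p) hn0 true (e : ℕ)
          omega
        have hκle : (κ : ℕ) = (ν : ℕ) ∨ (ν : ℕ) + 1 = (κ : ℕ) := by
          rcases hκν with rfl | ⟨-, hjor⟩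
          · exact Or.inl rfl
          · exact Or.inr hjor
        cases dir with
        | true =>
          have h1 := hposN_step_t hqlt hqp hp
          have h2 := hposN_step_t hj hep hp
          exact le_of_lt (mul_height_lt (by omega) (by omega))
        | false =>
          have h1 := hposN_step_f hqlt hqp hp
          have h2 := hposN_step_f hj hep hp
          exact le_of_lt (mul_height_lt (by omega) (by omega))
    · -- backward entry along edge k
      subst hqk
      have hkj' : k ≠ ((e : ℕ) + 1) % b.length := by
        intro hkk
        apply hred (e : ℕ)
        rw [← bLett_mod hb1 ((e : ℕ) + 1), ← hkk, hbk, hfwd]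
        rfl
      by_cases hqj : (k + 1) % b.length = (e : ℕ)
      · exfalso
        apply hred k
        rw [← bLett_mod hb1 (k + 1), hqj, hfwd, hbk]
        rfl
      · have hq_le : hposN b.length p dir ((k + 1) % b.length)
            ≤ hposN b.length p dir (e : ℕ) := mul_height_le (by omega) hHs (by omega)
        have hq_lt : hposN b.length p dir ((k + 1) % b.length)
            < hposN b.length p dir (e : ℕ) :=
          lt_of_le_of_ne hq_le
            (fun hh => hqj (hposN_inj hn0 (Nat.mod_lt _ hn0) hj dir hh))
        have hkp : k ≠ p := by
          intro h'
          have hdf : dir = false := by rw [hdir, ← h', hbk]; rfl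
          rw [h', hdf] at hq_lt
          have hx := hposN_psucc_f hp
          have hy := hposN_le (p := p) hn0 false (e : ℕ)
          omega
        have hκle : (κ : ℕ) = (ν : ℕ) ∨ (ν : ℕ) + 1 = (κ : ℕ) := by
          rcases hκν with rfl | ⟨-, hjor⟩
          · exact Or.inl rfl
          · exact Or.inr hjor
        have hkj : k ≠ (e : ℕ) := by
          intro h'
          rw [h', hfwd] at hbk
          exact absurd hbk (by simp)
        cases dir with
        | true =>
          have h1 := hposN_step_t hklt hkp hp
          have h2 := hposN_step_t hj hep hp
          exact le_of_lt (mul_height_lt (by omega) (by omega))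
        | false =>
          have h1 := hposN_step_f hklt hkp hp
          have h2 := hposN_step_f hj hep hp
          have hne1 : hposN b.length p false k ≠ hposN b.length p false (e : ℕ) :=
            fun hh => hkj (hposN_inj hn0 hklt hj false hh)
          have hne2 : hposN b.length p false k
              ≠ hposN b.length p false (((e : ℕ) + 1) % b.length) :=
            fun hh => hkj' (hposN_inj hn0 hklt (Nat.mod_lt _ hn0) false hh)
          exact le_of_lt (mul_height_lt (by omega) (by omega))
  · -- triangularity at the target coordinate
    rintro ⟨⟨⟨q, hqlt⟩, hqv⟩, ν⟩ hA hne
    have hA' : bandEntry K b hb1 lam a (((e : ℕ) + 1) % b.length) q μ ν ≠ 0 := hA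
    simp only [HH]
    rcases bandEntry_support hb1 (Nat.mod_lt _ hn0) hqlt hA' with ⟨hfq, hkq, hκν⟩ |
      ⟨hbk, hqk, hκν⟩
    · have hqj : q = (e : ℕ) := succ_mod_inj hqlt hj hkq.symm
      subst hqj
      rcases hκν with rfl | ⟨-, hjor⟩
      · exact absurd (Prod.ext (Subtype.ext (Fin.ext rfl)) rfl) hne
      · have hμr : (μ : ℕ) < r := μ.isLt
        have hνr : (ν : ℕ) < r := ν.isLt
        set M1 := r * hposN b.length p dir (e : ℕ)
        omega
    · exfalso
      apply hred (e : ℕ)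
      rw [← bLett_mod hb1 ((e : ℕ) + 1), hbk, hfwd]
      rfl

lemma piv_step_bwd {Q : FinQuiver} {b : List (Letter Q)} {hb1 : b ≠ []}
    {lam : K} {r : ℕ} (N : QSubRep (bandRep K Q b hb1 lam r))
    {p : ℕ} {dir : Bool}
    (hred : ∀ j, bLett b hb1 (j + 1) ≠ linv (bLett b hb1 j))
    (hcomp : ∀ j, ltgt (bLett b hb1 j) = bVtx b hb1 (j + 1))
    (hp : p < b.length) (hdir : dir = (bLett b hb1 p).isLeft)
    (hlam : lam ≠ 0) (hr : 1 ≤ r)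
    {a : Q.A} {e : Fin b.length} (hep : (e : ℕ) ≠ p)
    (hbwd : bLett b hb1 (e : ℕ) = Sum.inr a) {μ : Fin r}
    (hpiv : Piv N p dir ⟨((e : ℕ) + 1) % b.length, Nat.mod_lt _ e.pos⟩ μ) :
    Piv N p dir e μ := by
  classical
  have hn0 : 0 < b.length := e.pos
  have hj : (e : ℕ) < b.length := e.isLt
  have hsa : bVtx b hb1 (((e : ℕ) + 1) % b.length) = Q.s a := by
    rw [bVtx_mod, ← hcomp (e : ℕ), hbwd]; rfl
  have hta : bVtx b hb1 (e : ℕ) = Q.t a := by rw [bVtx_eq_lsrc, hbwd]; rfl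
  obtain ⟨i, hi, hlead⟩ := hpiv
  obtain rfl : i = Q.s a := hi.symm.trans hsa
  refine ⟨Q.t a, hta, ?_⟩
  refine lead_step (N.L (Q.s a)) (N.L (Q.t a))
    (fun pp qq => bandEntry K b hb1 lam a (pp.1.1 : ℕ) (qq.1.1 : ℕ) pp.2 qq.2)
    (fun f hf => N.compat a f hf) (HH b hb1 p dir r (Q.s a)) (HH b hb1 p dir r (Q.t a))
    hlead ?_ ?_ ?_
  · show bandEntry K b hb1 lam a (e : ℕ) (((e : ℕ) + 1) % b.length) μ μ ≠ 0
    rw [bandEntry_bwd_val hb1 lam r hj hbwd hred]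
    split_ifs
    · exact hlam
    · exact one_ne_zero
  · -- monotonicity
    rintro ⟨⟨⟨q, hqlt⟩, hqv⟩, ν⟩ ⟨⟨⟨k, hklt⟩, hkv⟩, κ⟩ hA hHs
    have hA' : bandEntry K b hb1 lam a k q κ ν ≠ 0 := hA
    simp only [HH] at hHs ⊢
    have hμr : (μ : ℕ) < r := μ.isLt
    have hνr : (ν : ℕ) < r := ν.isLt
    have hκr : (κ : ℕ) < r := κ.isLt
    rcases bandEntry_support hb1 hklt hqlt hA' with ⟨hfq, hkq, hκν⟩ | ⟨hbk, hqk, hκν⟩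
    · -- forward entry along edge q
      subst hkq
      have hκle : (κ : ℕ) = (ν : ℕ) ∨ (ν : ℕ) + 1 = (κ : ℕ) := by
        rcases hκν with rfl | ⟨-, hjor⟩
        · exact Or.inl rfl
        · exact Or.inr hjor
      have hqq : q ≠ ((e : ℕ) + 1) % b.length := by
        intro hqq'
        apply hred (e : ℕ)
        rw [← bLett_mod hb1 ((e : ℕ) + 1), ← hqq', hfq, hbwd]
        rfl
      have hq_le : hposN b.length p dir q
          ≤ hposN b.length p dir (((e : ℕ) + 1) % b.length) :=
        mul_height_le (by omega) hHs (by omega)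
      have hq_lt : hposN b.length p dir q
          < hposN b.length p dir (((e : ℕ) + 1) % b.length) :=
        lt_of_le_of_ne hq_le
          (fun hh => hqq (hposN_inj hn0 hqlt (Nat.mod_lt _ hn0) dir hh))
      have hqp : q ≠ p := by
        intro hqp'
        have hdt : dir = true := by rw [hdir, ← hqp', hfq]; rfl
        rw [hqp', hdt] at hq_lt
        have hx := hposN_p_t hp
        have hy := hposN_le (p := p) hn0 true (((e : ℕ) + 1) % b.length)
        omega
      have hne1 : (q + 1) % b.length ≠ ((e : ℕ) + 1) % b.length := by
        intro heq
        have hqe : q = (e : ℕ) := succ_mod_inj hqlt hj heq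
        rw [hqe, hbwd] at hfq
        exact absurd hfq (by simp)
      have hne2 : (q + 1) % b.length ≠ (e : ℕ) := by
        intro heq
        apply hred q
        rw [← bLett_mod hb1 (q + 1), heq, hbwd, hfq]
        rfl
      cases dir with
      | true =>
        have h1q := hposN_step_t hqlt hqp hp
        have h2e := hposN_step_t hj hep hp
        have hh1 : hposN b.length p true ((q + 1) % b.length)
            ≠ hposN b.length p true (((e : ℕ) + 1) % b.length) :=
          fun hh => hne1 (hposN_inj hn0 (Nat.mod_lt _ hn0) (Nat.mod_lt _ hn0) true hh)
        have hh2 : hposN b.length p true ((q + 1) % b.length)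
            ≠ hposN b.length p true (e : ℕ) :=
          fun hh => hne2 (hposN_inj hn0 (Nat.mod_lt _ hn0) hj true hh)
        exact le_of_lt (mul_height_lt (by omega) (by omega))
      | false =>
        have h1q := hposN_step_f hqlt hqp hp
        have h2e := hposN_step_f hj hep hp
        exact le_of_lt (mul_height_lt (by omega) (by omega))
    · -- backward entry along edge k
      subst hqk
      have hκle : (κ : ℕ) = (ν : ℕ) ∨ (ν : ℕ) + 1 = (κ : ℕ) := by
        rcases hκν with rfl | ⟨-, hjor⟩
        · exact Or.inl rfl
        · exact Or.inr hjor
      by_cases hke : k = (e : ℕ)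
      · subst hke
        set M1 := r * hposN b.length p dir (((e : ℕ) + 1) % b.length) with hM1
        set M2 := r * hposN b.length p dir (e : ℕ) with hM2
        omega
      · have hqq : (k + 1) % b.length ≠ ((e : ℕ) + 1) % b.length := by
          intro heq
          exact hke (succ_mod_inj hklt hj heq)
        have hq_le : hposN b.length p dir ((k + 1) % b.length)
            ≤ hposN b.length p dir (((e : ℕ) + 1) % b.length) :=
          mul_height_le (by omega) hHs (by omega)
        have hq_lt : hposN b.length p dir ((k + 1) % b.length)
            < hposN b.length p dir (((e : ℕ) + 1) % b.length) :=
          lt_of_le_of_ne hq_le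
            (fun hh => hqq (hposN_inj hn0 (Nat.mod_lt _ hn0) (Nat.mod_lt _ hn0) dir hh))
        have hkp : k ≠ p := by
          intro h'
          have hdf : dir = false := by rw [hdir, ← h', hbk]; rfl
          rw [h', hdf] at hq_lt
          have hx := hposN_psucc_f hp
          have hy := hposN_le (p := p) hn0 false (((e : ℕ) + 1) % b.length)
          omega
        cases dir with
        | true =>
          have h1k := hposN_step_t hklt hkp hp
          have h2e := hposN_step_t hj hep hp
          exact le_of_lt (mul_height_lt (by omega) (by omega))
        | false =>
          have h1k := hposN_step_f hklt hkp hp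
          have h2e := hposN_step_f hj hep hp
          exact le_of_lt (mul_height_lt (by omega) (by omega))
  · -- triangularity at the target coordinate
    rintro ⟨⟨⟨q, hqlt⟩, hqv⟩, ν⟩ hA hne
    have hA' : bandEntry K b hb1 lam a (e : ℕ) q μ ν ≠ 0 := hA
    simp only [HH]
    rcases bandEntry_support hb1 hj hqlt hA' with ⟨hfq, hkq, hκν⟩ | ⟨hbk, hqk, hκν⟩
    · exfalso
      apply hred q
      rw [← bLett_mod hb1 (q + 1), ← hkq, hbwd, hfq]
      rfl
    · have hqq : q = ((e : ℕ) + 1) % b.length := hqk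
      subst hqq
      rcases hκν with rfl | ⟨-, hjor⟩
      · exact absurd (Prod.ext (Subtype.ext (Fin.ext rfl)) rfl) hne
      · have hμr : (μ : ℕ) < r := μ.isLt
        have hνr : (ν : ℕ) < r := ν.isLt
        set M1 := r * hposN b.length p dir (((e : ℕ) + 1) % b.length)
        omega

/-! ### Correspondence between string and band positions -/

lemma mod_shift_cancel1 {n p q : ℕ} (hp : p < n) (hq : q < n) :
    ((p + 1 + q) % n + (n - 1 - p)) % n = q := by
  rw [Nat.mod_add_mod]
  have h1 : p + 1 + q + (n - 1 - p) = q + n := by omega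
  rw [h1, Nat.add_mod_right, Nat.mod_eq_of_lt hq]

lemma mod_shift_cancel2 {n p j : ℕ} (hp : p < n) (hj : j < n) :
    (p + 1 + (j + (n - 1 - p)) % n) % n = j := by
  rw [Nat.add_comm (p + 1), Nat.mod_add_mod]
  have h1 : j + (n - 1 - p) + (p + 1) = j + n := by omega
  rw [h1, Nat.add_mod_right, Nat.mod_eq_of_lt hj]

lemma shift_ne_p {n p q : ℕ} (hp : p < n) (hq : q < n - 1) : (p + 1 + q) % n ≠ p := by
  intro h
  have h1 := mod_shift_cancel1 hp (lt_trans hq (by omega) : q < n)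
  rw [h, psi_p hp] at h1
  omega

lemma shift_succ {n p q : ℕ} (hn : 0 < n) :
    ((p + 1 + q) % n + 1) % n = (p + 1 + (q + 1)) % n := by
  rw [Nat.mod_add_mod]
  congr 1

lemma getElem_idx {α : Type*} {l : List α} {i j : ℕ} (h : i = j) {hi : i < l.length} :
    l[i]'hi = l[j]'(h ▸ hi) := by subst h; rfl

lemma corr_letter {Q : FinQuiver} {l₁ l₂ : List (Letter Q)} {c : Letter Q}
    (hb1 : l₁ ++ c :: l₂ ≠ []) (q : ℕ) (hq : q < l₂.length + l₁.length) :
    (l₂ ++ l₁)[q]'(by rw [List.length_append]; exact hq)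
      = bLett (l₁ ++ c :: l₂) hb1 (l₁.length + 1 + q) := by
  have hn : (l₁ ++ c :: l₂).length = l₁.length + 1 + l₂.length := by
    rw [List.length_append, List.length_cons]
    omega
  rcases Nat.lt_or_ge q l₂.length with h2 | h2
  · rw [List.getElem_append_left h2]
    rw [bLett_eq_get' hb1 (by omega)]
    rw [List.getElem_append_right (by omega)]
    rw [getElem_idx (show l₁.length + 1 + q - l₁.length = q + 1 by omega)]
    rw [List.getElem_cons_succ]
  · rw [List.getElem_append_right h2]
    have hsplit : l₁.length + 1 + q
        = (l₁ ++ c :: l₂).length + (q - l₂.length) := by omega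
    rw [hsplit]
    have hmod : ((l₁ ++ c :: l₂).length + (q - l₂.length)) % (l₁ ++ c :: l₂).length
        = q - l₂.length := by
      rw [Nat.add_comm, Nat.add_mod_right, Nat.mod_eq_of_lt (by omega)]
    unfold bLett
    rw [hmod, List.getD_eq_getElem _ _ (by omega)]
    rw [List.getElem_append_left (by omega)]

lemma corr_vtx {Q : FinQuiver} {l₁ l₂ : List (Letter Q)} {c : Letter Q}
    (hv1 : l₂ ++ l₁ ≠ ([] : List (Letter Q))) (hb1 : l₁ ++ c :: l₂ ≠ [])
    (hcomp : ∀ j, ltgt (bLett (l₁ ++ c :: l₂) hb1 j)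
      = bVtx (l₁ ++ c :: l₂) hb1 (j + 1))
    (q : ℕ) (hq : q < l₂.length + l₁.length + 1) :
    wVtx (l₂ ++ l₁) hv1 q = bVtx (l₁ ++ c :: l₂) hb1 (l₁.length + 1 + q) := by
  have hvpos : 0 < l₂.length + l₁.length := by
    have := List.length_pos_iff.mpr hv1
    rw [List.length_append] at this
    omega
  rcases Nat.eq_zero_or_pos q with rfl | hq1
  · unfold wVtx
    rw [if_pos rfl, List.head_eq_getElem]
    rw [corr_letter hb1 0 hvpos]
    rw [bVtx_eq_lsrc]
  · unfold wVtx
    rw [if_neg (by omega)]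
    have hq2 : q - 1 < (l₂ ++ l₁).length := by rw [List.length_append]; omega
    rw [List.getD_eq_getElem _ _ hq2]
    rw [corr_letter hb1 (q - 1) (by omega)]
    rw [hcomp (l₁.length + 1 + (q - 1))]
    congr 1
    omega

/-! ### Counting helpers -/

lemma card_subtype_prod {A B : Type} [Fintype A] [Fintype B] (P : A × B → Prop) :
    Fintype.card {s : A × B // P s} = ∑ μ : B, Fintype.card {a : A // P (a, μ)} := by
  classical
  have e : {s : A × B // P s} ≃ Σ μ : B, {a : A // P (a, μ)} :=
    { toFun := fun s => ⟨s.1.2, ⟨s.1.1, s.2⟩⟩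
      invFun := fun t => ⟨(t.2.1, t.1), t.2.2⟩
      left_inv := fun s => rfl
      right_inv := fun t => rfl }
  rw [Fintype.card_congr e, Fintype.card_sigma]

def posEquiv {Q : FinQuiver} {l₁ l₂ : List (Letter Q)} {c : Letter Q}
    (hv1 : l₂ ++ l₁ ≠ ([] : List (Letter Q))) (hb1 : l₁ ++ c :: l₂ ≠ [])
    (hcomp : ∀ j, ltgt (bLett (l₁ ++ c :: l₂) hb1 j)
      = bVtx (l₁ ++ c :: l₂) hb1 (j + 1)) (i : Q.V) :
    {qq : Fin ((l₂ ++ l₁).length + 1) // wVtx (l₂ ++ l₁) hv1 (qq : ℕ) = i}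
      ≃ {j : Fin (l₁ ++ c :: l₂).length // bVtx (l₁ ++ c :: l₂) hb1 (j : ℕ) = i} := by
  have hn0 : 0 < (l₁ ++ c :: l₂).length := List.length_pos_iff.mpr hb1
  have hp : l₁.length < (l₁ ++ c :: l₂).length := by
    rw [List.length_append, List.length_cons]; omega
  have hlen : (l₂ ++ l₁).length + 1 = (l₁ ++ c :: l₂).length := by
    rw [List.length_append, List.length_append, List.length_cons]; omega
  refine
    { toFun := fun qq => ⟨⟨(l₁.length + 1 + (qq : ℕ)) % (l₁ ++ c :: l₂).length,
        Nat.mod_lt _ hn0⟩, ?_⟩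
      invFun := fun jj => ⟨⟨((jj : ℕ) + ((l₁ ++ c :: l₂).length - 1 - l₁.length))
          % (l₁ ++ c :: l₂).length, by
            have := Nat.mod_lt ((jj : ℕ) + ((l₁ ++ c :: l₂).length - 1 - l₁.length)) hn0
            omega⟩, ?_⟩
      left_inv := ?_
      right_inv := ?_ }
  · show bVtx (l₁ ++ c :: l₂) hb1 ((l₁.length + 1 + (qq : ℕ)) % (l₁ ++ c :: l₂).length) = i
    rw [bVtx_mod, ← corr_vtx hv1 hb1 hcomp (qq : ℕ)
      (by
        have h1 := qq.1.isLt
        have hL : (l₂ ++ l₁).length = l₂.length + l₁.length := by simp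
        omega)]
    exact qq.2
  · show wVtx (l₂ ++ l₁) hv1
        (((jj : ℕ) + ((l₁ ++ c :: l₂).length - 1 - l₁.length))
          % (l₁ ++ c :: l₂).length) = i
    rw [corr_vtx hv1 hb1 hcomp _
      (by
        have h1 := Nat.mod_lt ((jj : ℕ)
          + ((l₁ ++ c :: l₂).length - 1 - l₁.length)) hn0
        have hL : (l₁ ++ c :: l₂).length = l₁.length + (l₂.length + 1) := by simp
        omega)]
    rw [← bVtx_mod hb1, mod_shift_cancel2 hp jj.1.isLt]
    exact jj.2
  · rintro ⟨⟨q, hqlt⟩, hqv⟩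
    apply Subtype.ext
    apply Fin.ext
    show ((l₁.length + 1 + q) % (l₁ ++ c :: l₂).length
      + ((l₁ ++ c :: l₂).length - 1 - l₁.length)) % (l₁ ++ c :: l₂).length = q
    exact mod_shift_cancel1 hp (by omega)
  · rintro ⟨⟨j, hjlt⟩, hjv⟩
    apply Subtype.ext
    apply Fin.ext
    show (l₁.length + 1 + (j + ((l₁ ++ c :: l₂).length - 1 - l₁.length))
      % (l₁ ++ c :: l₂).length) % (l₁ ++ c :: l₂).length = j
    exact mod_shift_cancel2 hp hjlt

lemma lead_iff_piv {K : Type} [Field K] {Q : FinQuiver} {b : List (Letter Q)}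
    {hb1 : b ≠ []} {lam : K} {r : ℕ} (N : QSubRep (bandRep K Q b hb1 lam r))
    (p : ℕ) (dir : Bool) {i : Q.V} (aA : {j : Fin b.length // bVtx b hb1 (j : ℕ) = i})
    (μ : Fin r) :
    Lead (N.L i) (HH b hb1 p dir r i) (aA, μ) ↔ Piv N p dir aA.1 μ := by
  constructor
  · intro h
    exact ⟨i, aA.2, h⟩
  · rintro ⟨i', h', hl⟩
    obtain rfl : i' = i := h'.symm.trans aA.2
    exact hl

end DSB
/-- If the string `v` is obtained from the band `b` by deleting one
letter, then the stability space of the string module `M(v)` is contained in the stability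
space of the band module `M(b, λ, r)`. -/
theorem deleted_string_stability_space_subset_band
    (K : Type) [Field K] [IsAlgClosed K] (Q : FinQuiver) (D : BoundQuiver Q)
    (hsb : SpecialBiserial D) (b : List (Letter Q)) (hb : IsBand D b)
    (lam : K) (hlam : lam ≠ 0) (r : ℕ) (hr : 1 ≤ r)
    (v : List (Letter Q)) (hv : IsString D v) (hdel : DeleteOne b v) :
    stabSpace (stringRep K Q v hv.ne) ⊆ stabSpace (bandRep K Q b hb.1 lam r) := by
  classical
  obtain ⟨l₁, l₂, c, hbdef, hvdef⟩ := hdel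
  subst hbdef
  subst hvdef
  intro w hw
  obtain ⟨hw1, hw2⟩ := hw
  have hstr2 := hb.2.1 2 (by norm_num)
  have hl2 : listPow (l₁ ++ c :: l₂) 2 = (l₁ ++ c :: l₂) ++ (l₁ ++ c :: l₂) := by
    show (l₁ ++ c :: l₂) ++ ((l₁ ++ c :: l₂) ++ listPow (l₁ ++ c :: l₂) 0)
        = (l₁ ++ c :: l₂) ++ (l₁ ++ c :: l₂)
    rw [show listPow (l₁ ++ c :: l₂) 0 = [] from rfl, List.append_nil]
  have hred := DSB.cyc_red hb.1 (hl2 ▸ hstr2.red)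
  have hcomp := DSB.cyc_comp hb.1 (hl2 ▸ hstr2.comp)
  have hn0 : 0 < (l₁ ++ c :: l₂).length := List.length_pos_iff.mpr hb.1
  have hLb : (l₁ ++ c :: l₂).length = l₁.length + (l₂.length + 1) := by simp
  have hLv : (l₂ ++ l₁).length = l₂.length + l₁.length := by simp
  have hvne : (l₂ ++ l₁ : List (Letter Q)) ≠ [] := hv.ne
  have hvpos : 0 < (l₂ ++ l₁).length := List.length_pos_iff.mpr hvne
  have hp : l₁.length < (l₁ ++ c :: l₂).length := by omega
  have hcardv : ∀ i : Q.V,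
      Fintype.card
        {qq : Fin ((l₂ ++ l₁).length + 1) // wVtx (l₂ ++ l₁) hv.ne (qq : ℕ) = i}
      = Fintype.card
        {j : Fin (l₁ ++ c :: l₂).length // bVtx (l₁ ++ c :: l₂) hb.1 (j : ℕ) = i} :=
    fun i => Fintype.card_congr (DSB.posEquiv hv.ne hb.1 hcomp i)
  set dir := (bLett (l₁ ++ c :: l₂) hb.1 l₁.length).isLeft with hdirdef
  constructor
  · -- the total dimension pairs to zero
    have hdimb : ∀ i, QRep.dimVec (bandRep K Q (l₁ ++ c :: l₂) hb.1 lam r) i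
        = Fintype.card
          {j : Fin (l₁ ++ c :: l₂).length // bVtx (l₁ ++ c :: l₂) hb.1 (j : ℕ) = i}
            * r := by
      intro i
      have h0 : QRep.dimVec (bandRep K Q (l₁ ++ c :: l₂) hb.1 lam r) i
          = Module.finrank K
            (({j : Fin (l₁ ++ c :: l₂).length //
                bVtx (l₁ ++ c :: l₂) hb.1 (j : ℕ) = i} × Fin r) → K) := rfl
      rw [h0, Module.finrank_fintype_fun_eq_card, Fintype.card_prod, Fintype.card_fin]
    have hdims : ∀ i, QRep.dimVec (stringRep K Q (l₂ ++ l₁) hv.ne) i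
        = Fintype.card
          {qq : Fin ((l₂ ++ l₁).length + 1) // wVtx (l₂ ++ l₁) hv.ne (qq : ℕ) = i} := by
      intro i
      have h0 : QRep.dimVec (stringRep K Q (l₂ ++ l₁) hv.ne) i
          = Module.finrank K
            ({qq : Fin ((l₂ ++ l₁).length + 1) //
                wVtx (l₂ ++ l₁) hv.ne (qq : ℕ) = i} → K) := rfl
      rw [h0, Module.finrank_fintype_fun_eq_card]
    unfold stabInner at hw1 ⊢
    have hterm : ∀ i : Q.V,
        w i * ((QRep.dimVec (bandRep K Q (l₁ ++ c :: l₂) hb.1 lam r) i : ℕ) : ℝ)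
        = (r : ℝ) * (w i * ((QRep.dimVec (stringRep K Q (l₂ ++ l₁) hv.ne) i : ℕ) : ℝ)) := by
      intro i
      rw [hdimb i, hdims i, ← hcardv i]
      push_cast
      ring
    rw [Finset.sum_congr rfl (fun i _ => hterm i), ← Finset.mul_sum, hw1, mul_zero]
  · -- subrepresentations pair nonpositively
    intro NN
    have hclosure : ∀ (a : Q.A) (x y : ℕ) (μ : Fin r), stepsTo (l₂ ++ l₁) a x y →
        DSB.Piv NN l₁.length dir
          ⟨(l₁.length + 1 + x) % (l₁ ++ c :: l₂).length, Nat.mod_lt _ hn0⟩ μ →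
        DSB.Piv NN l₁.length dir
          ⟨(l₁.length + 1 + y) % (l₁ ++ c :: l₂).length, Nat.mod_lt _ hn0⟩ μ := by
      intro a x y μ hstep hpiv
      rcases hstep with ⟨rfl, hx⟩ | ⟨rfl, hy⟩
      · obtain ⟨hxlt, hxv⟩ := List.getElem?_eq_some_iff.mp hx
        have hlet : bLett (l₁ ++ c :: l₂) hb.1 (l₁.length + 1 + x) = Sum.inl a := by
          rw [← DSB.corr_letter hb.1 x (by omega)]
          exact hxv
        have hep : (l₁.length + 1 + x) % (l₁ ++ c :: l₂).length ≠ l₁.length :=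
          DSB.shift_ne_p hp (by omega)
        have hfwd : bLett (l₁ ++ c :: l₂) hb.1
            ((l₁.length + 1 + x) % (l₁ ++ c :: l₂).length) = Sum.inl a := by
          rw [DSB.bLett_mod]
          exact hlet
        have hres := DSB.piv_step_fwd NN hred hcomp hp hdirdef hlam hr
          (e := ⟨(l₁.length + 1 + x) % (l₁ ++ c :: l₂).length, Nat.mod_lt _ hn0⟩)
          hep hfwd hpiv
        have hfe : (⟨(((l₁.length + 1 + x) % (l₁ ++ c :: l₂).length) + 1)
              % (l₁ ++ c :: l₂).length,
            Nat.mod_lt _ hn0⟩ : Fin (l₁ ++ c :: l₂).length)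
            = ⟨(l₁.length + 1 + (x + 1)) % (l₁ ++ c :: l₂).length,
              Nat.mod_lt _ hn0⟩ := Fin.ext (DSB.shift_succ hn0)
        rw [← hfe]
        exact hres
      · obtain ⟨hylt, hyv⟩ := List.getElem?_eq_some_iff.mp hy
        have hlet : bLett (l₁ ++ c :: l₂) hb.1 (l₁.length + 1 + y) = Sum.inr a := by
          rw [← DSB.corr_letter hb.1 y (by omega)]
          exact hyv
        have hep : (l₁.length + 1 + y) % (l₁ ++ c :: l₂).length ≠ l₁.length :=
          DSB.shift_ne_p hp (by omega)
        have hbwd : bLett (l₁ ++ c :: l₂) hb.1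
            ((l₁.length + 1 + y) % (l₁ ++ c :: l₂).length) = Sum.inr a := by
          rw [DSB.bLett_mod]
          exact hlet
        have hfe : (⟨(((l₁.length + 1 + y) % (l₁ ++ c :: l₂).length) + 1)
              % (l₁ ++ c :: l₂).length,
            Nat.mod_lt _ hn0⟩ : Fin (l₁ ++ c :: l₂).length)
            = ⟨(l₁.length + 1 + (y + 1)) % (l₁ ++ c :: l₂).length,
              Nat.mod_lt _ hn0⟩ := Fin.ext (DSB.shift_succ hn0)
        have hpiv' : DSB.Piv NN l₁.length dir
            ⟨(((l₁.length + 1 + y) % (l₁ ++ c :: l₂).length) + 1)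
              % (l₁ ++ c :: l₂).length, Nat.mod_lt _ hn0⟩ μ := by
          rw [hfe]
          exact hpiv
        exact DSB.piv_step_bwd NN hred hcomp hp hdirdef hlam hr
          (e := ⟨(l₁.length + 1 + y) % (l₁ ++ c :: l₂).length, Nat.mod_lt _ hn0⟩)
          hep hbwd hpiv'
    -- the string coordinate subrepresentations
    have hUle : ∀ μ : Fin r,
        stabInner w (fun i => Fintype.card
          {qq : {q : Fin ((l₂ ++ l₁).length + 1) // wVtx (l₂ ++ l₁) hv.ne (q : ℕ) = i} //
            DSB.Piv NN l₁.length dir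
              ⟨(l₁.length + 1 + (qq.1 : ℕ)) % (l₁ ++ c :: l₂).length,
                Nat.mod_lt _ hn0⟩ μ}) ≤ 0 := by
      intro μ
      have h2 : stabInner w (fun i => Module.finrank K
          (DSB.coordSub (K := K)
            {q : Fin ((l₂ ++ l₁).length + 1) // wVtx (l₂ ++ l₁) hv.ne (q : ℕ) = i}
            (fun qq => DSB.Piv NN l₁.length dir
              ⟨(l₁.length + 1 + (qq.1 : ℕ)) % (l₁ ++ c :: l₂).length,
                Nat.mod_lt _ hn0⟩ μ))) ≤ 0 := by
        refine hw2 ⟨fun i => DSB.coordSub _ _, ?_⟩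
        intro a x hx
        intro tt htt
        have hval : (stringRep K Q (l₂ ++ l₁) hv.ne).φ a x tt
            = ∑ qq, (if stepsTo (l₂ ++ l₁) a (qq.1 : ℕ) (tt.1 : ℕ) then (1:K) else 0)
                * x qq := by
          simp [stringRep, Matrix.mulVecLin_apply, Matrix.mulVec, dotProduct]
          show ∑ qq, (if stepsTo (l₂ ++ l₁) a (qq.1 : ℕ) (tt.1 : ℕ) then (1:K) else 0)
            * x qq = _
          exact Finset.sum_congr rfl fun _ _ => by split_ifs <;> simp
        rw [hval]
        apply Finset.sum_eq_zero
        intro qq _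
        by_cases hst : stepsTo (l₂ ++ l₁) a (qq.1 : ℕ) (tt.1 : ℕ)
        · rw [if_pos hst, one_mul]
          by_cases hpq : DSB.Piv NN l₁.length dir
              ⟨(l₁.length + 1 + (qq.1 : ℕ)) % (l₁ ++ c :: l₂).length,
                Nat.mod_lt _ hn0⟩ μ
          · exact absurd (hclosure a _ _ μ hst hpq) htt
          · exact hx qq hpq
        · rw [if_neg hst, zero_mul]
      simp only [DSB.finrank_coordSub] at h2
      exact h2
    -- the band side count
    have hbandcount : ∀ i, Module.finrank K (NN.L i)
        = ∑ μ : Fin r, Fintype.card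
          {qq : {q : Fin ((l₂ ++ l₁).length + 1) // wVtx (l₂ ++ l₁) hv.ne (q : ℕ) = i} //
            DSB.Piv NN l₁.length dir
              ⟨(l₁.length + 1 + (qq.1 : ℕ)) % (l₁ ++ c :: l₂).length,
                Nat.mod_lt _ hn0⟩ μ} := by
      intro i
      have h1 := DSB.finrank_eq_card_lead (NN.L i)
        (DSB.HH (l₁ ++ c :: l₂) hb.1 l₁.length dir r i)
        (DSB.HH_inj (l₁ ++ c :: l₂) hb.1 l₁.length dir r hr i)
      have h2 := DSB.card_subtype_prod
        (A := {j : Fin (l₁ ++ c :: l₂).length // bVtx (l₁ ++ c :: l₂) hb.1 (j : ℕ) = i})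
        (B := Fin r)
        (P := fun s => DSB.Lead (NN.L i)
          (DSB.HH (l₁ ++ c :: l₂) hb.1 l₁.length dir r i) s)
      have h3 : ∀ μ : Fin r,
          Fintype.card
            {aA : {j : Fin (l₁ ++ c :: l₂).length //
                bVtx (l₁ ++ c :: l₂) hb.1 (j : ℕ) = i} //
              DSB.Lead (NN.L i) (DSB.HH (l₁ ++ c :: l₂) hb.1 l₁.length dir r i) (aA, μ)}
          = Fintype.card
            {qq : {q : Fin ((l₂ ++ l₁).length + 1) //
                wVtx (l₂ ++ l₁) hv.ne (q : ℕ) = i} //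
              DSB.Piv NN l₁.length dir
                ⟨(l₁.length + 1 + (qq.1 : ℕ)) % (l₁ ++ c :: l₂).length,
                  Nat.mod_lt _ hn0⟩ μ} := by
        intro μ
        refine Fintype.card_congr ?_
        refine Equiv.trans
          (Equiv.subtypeEquivRight (fun aA => DSB.lead_iff_piv NN l₁.length dir aA μ)) ?_
        exact ((DSB.posEquiv hv.ne hb.1 hcomp i).subtypeEquiv
          (fun qq => Iff.rfl)).symm
      exact h1.trans (h2.trans (Finset.sum_congr rfl (fun μ _ => h3 μ)))
    -- conclude
    unfold stabInner
    calc ∑ i, w i * ((Module.finrank K (NN.L i) : ℕ) : ℝ)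
        = ∑ i, ∑ μ : Fin r, w i * ((Fintype.card
            {qq : {q : Fin ((l₂ ++ l₁).length + 1) //
                wVtx (l₂ ++ l₁) hv.ne (q : ℕ) = i} //
              DSB.Piv NN l₁.length dir
                ⟨(l₁.length + 1 + (qq.1 : ℕ)) % (l₁ ++ c :: l₂).length,
                  Nat.mod_lt _ hn0⟩ μ} : ℕ) : ℝ) := by
          refine Finset.sum_congr rfl (fun i _ => ?_)
          rw [hbandcount i]
          push_cast
          rw [Finset.mul_sum]
      _ = ∑ μ : Fin r, ∑ i, w i * ((Fintype.card
            {qq : {q : Fin ((l₂ ++ l₁).length + 1) //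
                wVtx (l₂ ++ l₁) hv.ne (q : ℕ) = i} //
              DSB.Piv NN l₁.length dir
                ⟨(l₁.length + 1 + (qq.1 : ℕ)) % (l₁ ++ c :: l₂).length,
                  Nat.mod_lt _ hn0⟩ μ} : ℕ) : ℝ) := Finset.sum_comm
      _ ≤ 0 := by
          refine Finset.sum_nonpos (fun μ _ => ?_)
          exact hUle μ
end
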